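/- arXiv:2403.18931 — 4 statements merged into one kernel-verified Lean document; each statement's English description precedes it below -/
import Mathlib

section
/- Let d ≥ 1 and let U_1, …, U_d ∈ M_n(ℂ) be unitary matrices, and let γ_1, …, γ_{d+1} ∈ M_{d'}(ℂ) be a selfadjoint Clifford family. Then the Hermitian matrix G = ∑_{j=1}^d Im(U_j) ⊗ γ_j + ((d−1)·1 − ∑_{j=1}^d Re(U_j)) ⊗ γ_{d+1} satisfies G² ≥ (1 − 7·∑_{1≤j<i≤d} ‖U_jU_i − U_iU_j‖)·1 in the Loewner order. In particular, if ‖U_jU_i − U_iU_j‖ ≤ δ for all i ≠ j and 1 − 7δ·d(d−1)/2 > 0, then G is invertible. -/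
set_option linter.unusedSectionVars false
set_option maxHeartbeats 1000000

open Matrix
open scoped Kronecker Matrix.Norms.L2Operator ComplexOrder

noncomputable section

/-- The "real part" `(A + A*)/2` of a square complex matrix. -/
def mRe {n : ℕ} (A : Matrix (Fin n) (Fin n) ℂ) : Matrix (Fin n) (Fin n) ℂ :=
  (1/2 : ℂ) • (A + Aᴴ)

/-- The "imaginary part" `(A - A*)/(2i)` of a square complex matrix. -/
def mIm {n : ℕ} (A : Matrix (Fin n) (Fin n) ℂ) : Matrix (Fin n) (Fin n) ℂ :=
  (1/(2 * Complex.I) : ℂ) • (A - Aᴴ)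

namespace CliffordAux

section general
variable {m : Type*} [Fintype m] [DecidableEq m]
variable {m : Type*} [Fintype m] [DecidableEq m]

lemma star_dot_self_eq (x : m → ℂ) :
    star x ⬝ᵥ x = ((‖(WithLp.equiv 2 (m → ℂ)).symm x‖ ^ 2 : ℝ) : ℂ) := by
  change _ = (((‖WithLp.toLp 2 x‖ ^ 2 : ℝ)) : ℂ)
  rw [dotProduct_comm, ← EuclideanSpace.inner_toLp_toLp, inner_self_eq_norm_sq_to_K]
  norm_cast

lemma herm_form_real {H : Matrix m m ℂ} (hH : H.IsHermitian) (x : m → ℂ) :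
    star x ⬝ᵥ H *ᵥ x = (((star x ⬝ᵥ H *ᵥ x).re : ℝ) : ℂ) := by
  have h1 : star (star x ⬝ᵥ H *ᵥ x) = star x ⬝ᵥ H *ᵥ x := by
    rw [← star_dotProduct, star_mulVec, hH.eq, ← dotProduct_mulVec]
  exact ((Complex.conj_eq_iff_re).mp h1).symm

lemma herm_form_re_bound {H : Matrix m m ℂ} (x : m → ℂ) :
    |(star x ⬝ᵥ H *ᵥ x).re| ≤ ‖H‖ * ‖(WithLp.equiv 2 (m → ℂ)).symm x‖ ^ 2 := by
  set x' : EuclideanSpace ℂ m := (WithLp.equiv 2 (m → ℂ)).symm x with hx'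
  have h1 : star x ⬝ᵥ H *ᵥ x = @inner ℂ _ _ x' ((WithLp.equiv 2 (m → ℂ)).symm (H *ᵥ x)) := by
    rw [dotProduct_comm]; rfl
  rw [h1]
  calc |(@inner ℂ _ _ x' ((WithLp.equiv 2 (m → ℂ)).symm (H *ᵥ x))).re|
      ≤ ‖(@inner ℂ _ _ x' ((WithLp.equiv 2 (m → ℂ)).symm (H *ᵥ x)) : ℂ)‖ := Complex.abs_re_le_norm _
    _ ≤ ‖x'‖ * ‖(WithLp.equiv 2 (m → ℂ)).symm (H *ᵥ x)‖ := norm_inner_le_norm _ _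
    _ ≤ ‖x'‖ * (‖H‖ * ‖x'‖) := by
        gcongr
        exact H.l2_opNorm_mulVec x'
    _ = ‖H‖ * ‖x'‖ ^ 2 := by ring

lemma posSemidef_smul_one_add {H : Matrix m m ℂ} (hH : H.IsHermitian) {c : ℝ}
    (hc : ‖H‖ ≤ c) : ((c : ℂ) • 1 + H).PosSemidef := by
  refine Matrix.PosSemidef.of_dotProduct_mulVec_nonneg ?_ ?_
  · apply Matrix.IsHermitian.add _ hH
    simp [Matrix.IsHermitian, conjTranspose_smul, Complex.star_def, Complex.conj_ofReal]
  · intro x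
    have expand : star x ⬝ᵥ ((c : ℂ) • 1 + H) *ᵥ x
        = (c : ℂ) * (star x ⬝ᵥ x) + star x ⬝ᵥ H *ᵥ x := by
      rw [add_mulVec, dotProduct_add, smul_mulVec, one_mulVec, dotProduct_smul,
        smul_eq_mul]
    rw [expand, star_dot_self_eq, herm_form_real hH]
    set t := ‖(WithLp.equiv 2 (m → ℂ)).symm x‖
    have hb := herm_form_re_bound (H := H) x
    rw [← Complex.ofReal_mul, ← Complex.ofReal_add]
    rw [Complex.zero_le_real]
    have := abs_le.mp hb
    nlinarith [sq_nonneg t, this.1]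



variable {p : Type*} [Fintype p] [DecidableEq p]

-- mulVec-based bound on op norm
lemma opNorm_le_of_mulVec {A : Matrix m m ℂ} {c : ℝ} (hc : 0 ≤ c)
    (h : ∀ x : m → ℂ, ‖(WithLp.equiv 2 (m → ℂ)).symm (A *ᵥ x)‖
      ≤ c * ‖(WithLp.equiv 2 (m → ℂ)).symm x‖) : ‖A‖ ≤ c := by
  rw [l2_opNorm_def]
  apply ContinuousLinearMap.opNorm_le_bound _ hc
  intro x
  have := h ((WithLp.equiv 2 (m → ℂ)) x)
  simpa [Matrix.toEuclideanLin_apply] using this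

lemma norm_le_of_sandwich {P : Matrix m m ℂ} (hP : P.PosSemidef) {c : ℝ} (hc : 0 ≤ c)
    (h : ((c : ℂ) • 1 - P).PosSemidef) : ‖P‖ ≤ c := by
  have hsq : ∃ S : Matrix m m ℂ, S.IsHermitian ∧ S * S = P := by
    open scoped MatrixOrder in
    exact ⟨CFC.sqrt P, (Matrix.nonneg_iff_posSemidef.mp (CFC.sqrt_nonneg P)).1,
      CFC.sqrt_mul_sqrt_self P hP.nonneg⟩
  obtain ⟨S, hSh, hSS⟩ := hsq
  have key : ∀ x : m → ℂ, ‖(WithLp.equiv 2 (m → ℂ)).symm (S *ᵥ x)‖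
      ≤ Real.sqrt c * ‖(WithLp.equiv 2 (m → ℂ)).symm x‖ := by
    intro x
    have h1 : star (S *ᵥ x) ⬝ᵥ (S *ᵥ x) = star x ⬝ᵥ P *ᵥ x := by
      rw [star_mulVec, dotProduct_mulVec, vecMul_vecMul, hSh.eq, hSS, ← dotProduct_mulVec]
    have h2 := h.dotProduct_mulVec_nonneg x
    have h3 : star x ⬝ᵥ ((c : ℂ) • 1 - P) *ᵥ x
        = (c : ℂ) * (star x ⬝ᵥ x) - star x ⬝ᵥ P *ᵥ x := by
      rw [sub_mulVec, dotProduct_sub, smul_mulVec, one_mulVec, dotProduct_smul,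
        smul_eq_mul]
    rw [h3] at h2
    have h4 := star_dot_self_eq (S *ᵥ x)
    have h5 := star_dot_self_eq x
    rw [h1] at h4
    -- star x ⬝ᵥ P *ᵥ x = ‖Sx‖²  and  ≤ c ‖x‖²
    set a := ‖(WithLp.equiv 2 (m → ℂ)).symm (S *ᵥ x)‖
    set b := ‖(WithLp.equiv 2 (m → ℂ)).symm x‖
    have h6 : 0 ≤ c * b ^ 2 - a ^ 2 := by
      have he : ((c * b ^ 2 - a ^ 2 : ℝ) : ℂ) = (c : ℂ) * (star x ⬝ᵥ x) - star x ⬝ᵥ P *ᵥ x := by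
        rw [h4, h5]; push_cast; ring
      rw [← Complex.zero_le_real, he]; exact h2
    have h7 : a ^ 2 ≤ (Real.sqrt c * b) ^ 2 := by
      rw [mul_pow, Real.sq_sqrt hc]
      linarith
    calc a = Real.sqrt (a ^ 2) := (Real.sqrt_sq (by positivity)).symm
      _ ≤ Real.sqrt ((Real.sqrt c * b) ^ 2) := Real.sqrt_le_sqrt h7
      _ = Real.sqrt c * b := Real.sqrt_sq (by positivity)
  have hSnorm : ‖S‖ ≤ Real.sqrt c := opNorm_le_of_mulVec (Real.sqrt_nonneg c) key
  calc ‖P‖ = ‖Sᴴ * S‖ := by rw [hSh.eq, hSS]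
    _ = ‖S‖ * ‖S‖ := l2_opNorm_conjTranspose_mul_self S
    _ ≤ Real.sqrt c * Real.sqrt c := by
        apply mul_le_mul hSnorm hSnorm (norm_nonneg S) (Real.sqrt_nonneg c)
    _ = c := Real.mul_self_sqrt hc


lemma sub_kron (A A' : Matrix m m ℂ) (B : Matrix p p ℂ) :
    (A - A') ⊗ₖ B = A ⊗ₖ B - A' ⊗ₖ B := by
  ext ⟨i, k⟩ ⟨j, l⟩
  simp [kroneckerMap_apply, sub_mul]

lemma kron_sub (A : Matrix m m ℂ) (B B' : Matrix p p ℂ) :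
    A ⊗ₖ (B - B') = A ⊗ₖ B - A ⊗ₖ B' := by
  ext ⟨i, k⟩ ⟨j, l⟩
  simp [kroneckerMap_apply, mul_sub]

lemma sum_kron {ι : Type*} (s : Finset ι) (f : ι → Matrix m m ℂ) (B : Matrix p p ℂ) :
    (∑ i ∈ s, f i) ⊗ₖ B = ∑ i ∈ s, (f i ⊗ₖ B) := by
  ext ⟨i, k⟩ ⟨j, l⟩
  simp only [kroneckerMap_apply, Matrix.sum_apply, Finset.sum_mul]

lemma kron_conjTranspose (A : Matrix m m ℂ) (B : Matrix p p ℂ) :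
    (A ⊗ₖ B)ᴴ = Aᴴ ⊗ₖ Bᴴ := by
  ext ⟨i, k⟩ ⟨j, l⟩
  simp [conjTranspose_apply, kroneckerMap_apply]

lemma posSemidef_kron {A : Matrix m m ℂ} {B : Matrix p p ℂ}
    (hA : A.PosSemidef) (hB : B.PosSemidef) : (A ⊗ₖ B).PosSemidef := by
  exact hA.kronecker hB

lemma posSemidef_real_smul {A : Matrix m m ℂ} (hA : A.PosSemidef) {r : ℝ} (hr : 0 ≤ r) :
    ((r : ℂ) • A).PosSemidef := by
  refine Matrix.PosSemidef.of_dotProduct_mulVec_nonneg ?_ ?_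
  · rw [Matrix.IsHermitian, conjTranspose_smul, hA.1.eq, Complex.star_def, Complex.conj_ofReal]
  · intro x
    rw [smul_mulVec, dotProduct_smul, smul_eq_mul]
    exact mul_nonneg (Complex.zero_le_real.2 hr) (hA.dotProduct_mulVec_nonneg x)

lemma posSemidef_sum {ι : Type*} [DecidableEq ι] (s : Finset ι) (f : ι → Matrix m m ℂ)
    (h : ∀ i ∈ s, (f i).PosSemidef) : (∑ i ∈ s, f i).PosSemidef := by
  induction s using Finset.induction_on with
  | empty => simpa using Matrix.PosSemidef.zero
  | insert a s hx ih =>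
      rw [Finset.sum_insert hx]
      exact ((h _ (by simp)).add (ih fun i hi => h i (by simp [hi])))

lemma norm_one_le : ‖(1 : Matrix m m ℂ)‖ ≤ 1 := by
  have h := l2_opNorm_conjTranspose_mul_self (1 : Matrix m m ℂ)
  rw [conjTranspose_one, one_mul] at h
  nlinarith [norm_nonneg (1 : Matrix m m ℂ)]

lemma norm_le_one_of_unitary {U : Matrix m m ℂ} (h : Uᴴ * U = 1) : ‖U‖ ≤ 1 := by
  have h1 := l2_opNorm_conjTranspose_mul_self U
  rw [h] at h1
  have h2 : ‖U‖ * ‖U‖ ≤ 1 := h1 ▸ norm_one_le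
  nlinarith [norm_nonneg U]

lemma kron_norm_le (A : Matrix m m ℂ) (B : Matrix p p ℂ) : ‖A ⊗ₖ B‖ ≤ ‖A‖ * ‖B‖ := by
  set a := ‖Aᴴ * A‖ with ha
  set b := ‖Bᴴ * B‖ with hb
  have hP : (Aᴴ * A).PosSemidef := posSemidef_conjTranspose_mul_self A
  have hQ : (Bᴴ * B).PosSemidef := posSemidef_conjTranspose_mul_self B
  have hPle : ((a : ℂ) • 1 - Aᴴ * A).PosSemidef := by
    have := posSemidef_smul_one_add (H := -(Aᴴ * A)) hP.1.neg (by rw [norm_neg])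
    rwa [← sub_eq_add_neg] at this
  have hQle : ((b : ℂ) • 1 - Bᴴ * B).PosSemidef := by
    have := posSemidef_smul_one_add (H := -(Bᴴ * B)) hQ.1.neg (by rw [norm_neg])
    rwa [← sub_eq_add_neg] at this
  have key : (((a * b : ℝ) : ℂ) • 1 - (Aᴴ * A) ⊗ₖ (Bᴴ * B)).PosSemidef := by
    have hid : ((a * b : ℝ) : ℂ) • (1 : Matrix (m × p) (m × p) ℂ) - (Aᴴ * A) ⊗ₖ (Bᴴ * B)
        = ((a : ℂ) • 1 - Aᴴ * A) ⊗ₖ (Bᴴ * B)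
          + (a : ℂ) • ((1 : Matrix m m ℂ) ⊗ₖ ((b : ℂ) • 1 - Bᴴ * B)) := by
      rw [sub_kron, kron_sub, smul_kronecker, kronecker_smul, one_kronecker_one, smul_sub,
        smul_smul]
      push_cast
      abel
    rw [hid]
    exact (posSemidef_kron hPle hQ).add
      (posSemidef_real_smul (posSemidef_kron (Matrix.PosSemidef.one) hQle)
        (by rw [ha]; exact norm_nonneg _))
  have hkq : ((Aᴴ * A) ⊗ₖ (Bᴴ * B)).PosSemidef := posSemidef_kron hP hQ
  have h1 : ‖(Aᴴ * A) ⊗ₖ (Bᴴ * B)‖ ≤ a * b :=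
    norm_le_of_sandwich hkq (mul_nonneg (norm_nonneg _) (norm_nonneg _)) key
  have h2 : ‖(A ⊗ₖ B)ᴴ * (A ⊗ₖ B)‖ = ‖A ⊗ₖ B‖ * ‖A ⊗ₖ B‖ :=
    l2_opNorm_conjTranspose_mul_self _
  rw [kron_conjTranspose, ← mul_kronecker_mul] at h2
  have h3 : ‖A ⊗ₖ B‖ * ‖A ⊗ₖ B‖ ≤ ‖A‖ * ‖A‖ * (‖B‖ * ‖B‖) := by
    rw [← h2]
    calc ‖(Aᴴ * A) ⊗ₖ (Bᴴ * B)‖ ≤ a * b := h1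
      _ = ‖A‖ * ‖A‖ * (‖B‖ * ‖B‖) := by
          rw [ha, hb, l2_opNorm_conjTranspose_mul_self, l2_opNorm_conjTranspose_mul_self]
  nlinarith [norm_nonneg (A ⊗ₖ B), norm_nonneg A, norm_nonneg B,
    mul_nonneg (norm_nonneg A) (norm_nonneg B)]


end general

section pairs

lemma sum_pairs {M : Type*} [AddCommMonoid M] {d : ℕ} (g : Fin d → Fin d → M) :
    ∑ j : Fin d, ∑ i : Fin d, g j i
      = (∑ q ∈ Finset.univ.filter (fun q : Fin d × Fin d => q.1 < q.2),
          (g q.1 q.2 + g q.2 q.1)) + ∑ j : Fin d, g j j := by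
  classical
  have h0 : ∑ j : Fin d, ∑ i : Fin d, g j i
      = ∑ q ∈ (Finset.univ : Finset (Fin d × Fin d)), g q.1 q.2 := by
    rw [← Finset.univ_product_univ, Finset.sum_product]
  rw [h0]
  rw [← Finset.sum_filter_add_sum_filter_not Finset.univ (fun q : Fin d × Fin d => q.1 < q.2)]
  rw [Finset.sum_add_distrib, add_assoc]
  congr 1
  rw [← Finset.sum_filter_add_sum_filter_not
    (Finset.univ.filter (fun q : Fin d × Fin d => ¬ q.1 < q.2)) (fun q => q.2 < q.1),
    Finset.filter_filter, Finset.filter_filter]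
  congr 1
  · apply Finset.sum_nbij' (fun q => Prod.swap q) (fun q => Prod.swap q)
    · intro q hq
      simp only [Finset.mem_filter, Finset.mem_univ, true_and] at hq ⊢
      exact hq.2
    · intro q hq
      simp only [Finset.mem_filter, Finset.mem_univ, true_and] at hq ⊢
      exact ⟨not_lt.mpr (le_of_lt hq), hq⟩
    · intro q _; simp
    · intro q _; simp
    · intro q _; rfl
  · apply Finset.sum_nbij' (fun q : Fin d × Fin d => q.1) (fun j : Fin d => (j, j))
    · intro q _; simp
    · intro q hq
      simp only [Finset.mem_filter, Finset.mem_univ, true_and, not_lt] at hq ⊢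
      omega
    · intro q hq
      simp only [Finset.mem_filter, Finset.mem_univ, true_and, not_lt] at hq
      have h12 : q.1 = q.2 := le_antisymm hq.2 hq.1
      exact Prod.ext rfl h12
    · intro q _; rfl
    · intro q hq
      simp only [Finset.mem_filter, Finset.mem_univ, true_and, not_lt] at hq
      have : q.1 = q.2 := le_antisymm hq.2 hq.1
      rw [this]

end pairs

section general2
variable {m : Type*} [Fintype m] [DecidableEq m]


lemma l2_opNorm_mul' (A B : Matrix m m ℂ) : ‖A * B‖ ≤ ‖A‖ * ‖B‖ := l2_opNorm_mul A B

lemma comm_conj_left {U : Matrix m m ℂ} (hU1 : U * Uᴴ = 1) (hU2 : Uᴴ * U = 1)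
    (W : Matrix m m ℂ) : ‖Uᴴ * W - W * Uᴴ‖ ≤ ‖U * W - W * U‖ := by
  have hu : ‖Uᴴ‖ ≤ 1 := by rw [l2_opNorm_conjTranspose]; exact norm_le_one_of_unitary hU2
  have e1 : (U * W - W * U) * Uᴴ = U * (W * Uᴴ) - W := by
    rw [sub_mul, mul_assoc, mul_assoc, hU1, mul_one]
  have e2 : Uᴴ * (U * (W * Uᴴ) - W) = W * Uᴴ - Uᴴ * W := by
    rw [mul_sub, ← mul_assoc, hU2, one_mul]
  calc ‖Uᴴ * W - W * Uᴴ‖ = ‖-(W * Uᴴ - Uᴴ * W)‖ := by rw [neg_sub]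
    _ = ‖W * Uᴴ - Uᴴ * W‖ := norm_neg _
    _ = ‖Uᴴ * ((U * W - W * U) * Uᴴ)‖ := by rw [e1, e2]
    _ ≤ ‖Uᴴ‖ * ‖(U * W - W * U) * Uᴴ‖ := l2_opNorm_mul _ _
    _ ≤ ‖Uᴴ‖ * (‖U * W - W * U‖ * ‖Uᴴ‖) := by
        have := l2_opNorm_mul' (U * W - W * U) Uᴴ
        have h0 := norm_nonneg Uᴴ
        nlinarith [norm_nonneg (U * W - W * U), norm_nonneg ((U * W - W * U) * Uᴴ)]
    _ ≤ 1 * (‖U * W - W * U‖ * 1) := by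
        have h0 := norm_nonneg Uᴴ
        nlinarith [norm_nonneg (U * W - W * U), hu, mul_nonneg h0 h0,
          mul_le_one₀ hu h0 hu]
    _ = ‖U * W - W * U‖ := by ring

lemma comm_conj_right {W : Matrix m m ℂ} (hW1 : W * Wᴴ = 1) (hW2 : Wᴴ * W = 1)
    (U : Matrix m m ℂ) : ‖U * Wᴴ - Wᴴ * U‖ ≤ ‖U * W - W * U‖ := by
  have h := comm_conj_left hW1 hW2 U
  calc ‖U * Wᴴ - Wᴴ * U‖ = ‖-(Wᴴ * U - U * Wᴴ)‖ := by rw [neg_sub]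
    _ = ‖Wᴴ * U - U * Wᴴ‖ := norm_neg _
    _ ≤ ‖W * U - U * W‖ := h
    _ = ‖-(U * W - W * U)‖ := by rw [neg_sub]
    _ = ‖U * W - W * U‖ := norm_neg _

lemma comm_conj_both (U W : Matrix m m ℂ) :
    ‖Uᴴ * Wᴴ - Wᴴ * Uᴴ‖ = ‖U * W - W * U‖ := by
  have e : Uᴴ * Wᴴ - Wᴴ * Uᴴ = (W * U - U * W)ᴴ := by
    rw [conjTranspose_sub, conjTranspose_mul, conjTranspose_mul]
  rw [e, l2_opNorm_conjTranspose, ← neg_sub, norm_neg]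

end general2

section finlemmas


variable {n : ℕ}

lemma norm_half : ‖(1/2 : ℂ)‖ = 1/2 := by
  rw [norm_div, norm_one]
  simp

lemma norm_halfI : ‖(1/(2 * Complex.I) : ℂ)‖ = 1/2 := by
  rw [norm_div, norm_one, norm_mul, Complex.norm_I]
  simp

lemma mRe_herm (A : Matrix (Fin n) (Fin n) ℂ) : (mRe A).IsHermitian := by
  rw [Matrix.IsHermitian, mRe, conjTranspose_smul, conjTranspose_add,
    conjTranspose_conjTranspose]
  congr 1
  · norm_num
  · exact add_comm _ _

lemma mIm_herm (A : Matrix (Fin n) (Fin n) ℂ) : (mIm A).IsHermitian := by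
  have hc : star (1/(2*Complex.I) : ℂ) = -(1/(2*Complex.I)) := by
    rw [Complex.star_def, map_div₀, _root_.map_one, _root_.map_mul, Complex.conj_I]
    have : ((starRingEnd ℂ) 2) = 2 := by
      rw [Complex.conj_eq_iff_re]
      norm_num
    rw [this]
    field_simp
  rw [Matrix.IsHermitian, mIm, conjTranspose_smul, conjTranspose_sub,
    conjTranspose_conjTranspose, hc, neg_smul, ← smul_neg, neg_sub]

lemma norm_mRe_le {U : Matrix (Fin n) (Fin n) ℂ} (hU1 : U * Uᴴ = 1) (hU2 : Uᴴ * U = 1) :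
    ‖mRe U‖ ≤ 1 := by
  rw [mRe, norm_smul, norm_half]
  have h1 : ‖U‖ ≤ 1 := norm_le_one_of_unitary hU2
  have h2 : ‖Uᴴ‖ ≤ 1 := by rw [l2_opNorm_conjTranspose]; exact h1
  calc (1/2 : ℝ) * ‖U + Uᴴ‖ ≤ (1/2) * (‖U‖ + ‖Uᴴ‖) := by
        have := norm_add_le U Uᴴ
        linarith
    _ ≤ 1 := by linarith

lemma comm_mRe_left {U : Matrix (Fin n) (Fin n) ℂ} (hU1 : U * Uᴴ = 1) (hU2 : Uᴴ * U = 1)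
    (W : Matrix (Fin n) (Fin n) ℂ) :
    ‖mRe U * W - W * mRe U‖ ≤ ‖U * W - W * U‖ := by
  have hid : mRe U * W - W * mRe U
      = (1/2 : ℂ) • ((U * W - W * U) + (Uᴴ * W - W * Uᴴ)) := by
    rw [mRe, smul_mul_assoc, mul_smul_comm, ← smul_sub]
    congr 1
    noncomm_ring
  rw [hid, norm_smul, norm_half]
  have h1 := comm_conj_left hU1 hU2 W
  have h2 := norm_add_le (U * W - W * U) (Uᴴ * W - W * Uᴴ)
  linarith

lemma comm_mRe_conj {U W : Matrix (Fin n) (Fin n) ℂ} (hU1 : U * Uᴴ = 1) (hU2 : Uᴴ * U = 1)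
    (hW1 : W * Wᴴ = 1) (hW2 : Wᴴ * W = 1) :
    ‖mRe U * Wᴴ - Wᴴ * mRe U‖ ≤ ‖U * W - W * U‖ := by
  exact (comm_mRe_left hU1 hU2 Wᴴ).trans (comm_conj_right hW1 hW2 U)

lemma comm_mIm_mIm {U W : Matrix (Fin n) (Fin n) ℂ} (hU1 : U * Uᴴ = 1) (hU2 : Uᴴ * U = 1)
    (hW1 : W * Wᴴ = 1) (hW2 : Wᴴ * W = 1) :
    ‖mIm U * mIm W - mIm W * mIm U‖ ≤ ‖U * W - W * U‖ := by
  have hid : mIm U * mIm W - mIm W * mIm U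
      = ((1/(2 * Complex.I)) * (1/(2 * Complex.I)) : ℂ) •
        (((U * W - W * U) + (Uᴴ * Wᴴ - Wᴴ * Uᴴ)) - ((U * Wᴴ - Wᴴ * U) + (Uᴴ * W - W * Uᴴ))) := by
    rw [mIm, mIm, smul_mul_smul_comm, smul_mul_smul_comm, ← smul_sub]
    congr 1
    noncomm_ring
  rw [hid, norm_smul, norm_mul, norm_halfI]
  have b1 := comm_conj_both U W
  have b2 := comm_conj_right hW1 hW2 U
  have b3 := comm_conj_left hU1 hU2 W
  have h2 := norm_sub_le ((U * W - W * U) + (Uᴴ * Wᴴ - Wᴴ * Uᴴ))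
    ((U * Wᴴ - Wᴴ * U) + (Uᴴ * W - W * Uᴴ))
  have h3 := norm_add_le (U * W - W * U) (Uᴴ * Wᴴ - Wᴴ * Uᴴ)
  have h4 := norm_add_le (U * Wᴴ - Wᴴ * U) (Uᴴ * W - W * Uᴴ)
  linarith

lemma comm_mIm_mRe {U W : Matrix (Fin n) (Fin n) ℂ} (hU1 : U * Uᴴ = 1) (hU2 : Uᴴ * U = 1)
    (hW1 : W * Wᴴ = 1) (hW2 : Wᴴ * W = 1) :
    ‖mIm U * mRe W - mRe W * mIm U‖ ≤ ‖U * W - W * U‖ := by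
  have hid : mIm U * mRe W - mRe W * mIm U
      = ((1/(2 * Complex.I)) * (1/2) : ℂ) •
        (((U * W - W * U) + (U * Wᴴ - Wᴴ * U)) - ((Uᴴ * W - W * Uᴴ) + (Uᴴ * Wᴴ - Wᴴ * Uᴴ))) := by
    rw [mIm, mRe, smul_mul_smul_comm, smul_mul_smul_comm,
      mul_comm ((1:ℂ)/2) (1/(2*Complex.I)), ← smul_sub]
    congr 1
    noncomm_ring
  rw [hid, norm_smul, norm_mul, norm_halfI, norm_half]
  have b1 := comm_conj_both U W
  have b2 := comm_conj_right hW1 hW2 U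
  have b3 := comm_conj_left hU1 hU2 W
  have h2 := norm_sub_le ((U * W - W * U) + (U * Wᴴ - Wᴴ * U))
    ((Uᴴ * W - W * Uᴴ) + (Uᴴ * Wᴴ - Wᴴ * Uᴴ))
  have h3 := norm_add_le (U * W - W * U) (U * Wᴴ - Wᴴ * U)
  have h4 := norm_add_le (Uᴴ * W - W * Uᴴ) (Uᴴ * Wᴴ - Wᴴ * Uᴴ)
  linarith

lemma comm_mIm_mRe_self {U : Matrix (Fin n) (Fin n) ℂ} (hU1 : U * Uᴴ = 1) (hU2 : Uᴴ * U = 1) :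
    mIm U * mRe U - mRe U * mIm U = 0 := by
  have hid : mIm U * mRe U - mRe U * mIm U
      = ((1/(2 * Complex.I)) * (1/2) : ℂ) •
        ((U * Uᴴ - Uᴴ * U) + (U * Uᴴ - Uᴴ * U)) := by
    rw [mIm, mRe, smul_mul_smul_comm, smul_mul_smul_comm,
      mul_comm ((1:ℂ)/2) (1/(2*Complex.I)), ← smul_sub]
    congr 1
    noncomm_ring
  rw [hid, hU1, hU2, sub_self, add_zero, smul_zero]

lemma mRe_sq_add_mIm_sq {n : ℕ} {U : Matrix (Fin n) (Fin n) ℂ}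
    (hU1 : U * Uᴴ = 1) (hU2 : Uᴴ * U = 1) :
    mRe U * mRe U + mIm U * mIm U = 1 := by
  rw [mRe, mIm, smul_mul_smul_comm, smul_mul_smul_comm]
  have hc2 : ((1:ℂ)/(2 * Complex.I)) * (1/(2 * Complex.I)) = -(1/4) := by
    have h4 : (2 * Complex.I) * (2 * Complex.I) = -4 := by
      have := Complex.I_mul_I
      ring_nf
      rw [Complex.I_sq]
      ring
    rw [div_mul_div_comm, one_mul, h4]
    norm_num
  have hc1 : ((1:ℂ)/2) * (1/2) = 1/4 := by norm_num
  rw [hc1, hc2, neg_smul, ← sub_eq_add_neg, ← smul_sub]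
  have hid : (U + Uᴴ) * (U + Uᴴ) - (U - Uᴴ) * (U - Uᴴ)
      = (U * Uᴴ + Uᴴ * U) + (U * Uᴴ + Uᴴ * U) := by noncomm_ring
  rw [hid, hU1, hU2]
  module

end finlemmas

lemma half_eq {m : Type*} [Fintype m] [DecidableEq m] {X Y : Matrix m m ℂ}
    (h : X + X = Y + Y) : X = Y := by
  have h2 : (2:ℂ) • X = (2:ℂ) • Y := by
    rw [two_smul, two_smul]; exact h
  have h3 := congrArg (fun Z => ((2:ℂ)⁻¹) • Z) h2
  simpa [smul_smul] using h3

section cardsec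

lemma card_pairs (d : ℕ) :
    2 * (Finset.univ.filter (fun q : Fin d × Fin d => q.1 < q.2)).card = d * d - d := by
  classical
  have hswap : (Finset.univ.filter (fun q : Fin d × Fin d => q.1 < q.2)).card
      = (Finset.univ.filter (fun q : Fin d × Fin d => q.2 < q.1)).card := by
    apply Finset.card_nbij' (fun q => Prod.swap q) (fun q => Prod.swap q)
    · intro q hq
      simp only [Finset.coe_filter, Set.mem_setOf_eq, Prod.fst_swap, Prod.snd_swap,
        Finset.mem_univ, true_and] at hq ⊢
      exact hq
    · intro q hq
      simp only [Finset.coe_filter, Set.mem_setOf_eq, Prod.fst_swap, Prod.snd_swap,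
        Finset.mem_univ, true_and] at hq ⊢
      exact hq
    · intro q _; simp
    · intro q _; simp
  have hunion : (Finset.univ.filter (fun q : Fin d × Fin d => q.1 < q.2))
      ∪ (Finset.univ.filter (fun q : Fin d × Fin d => q.2 < q.1))
      = (Finset.univ : Finset (Fin d)).offDiag := by
    ext q
    simp only [Finset.mem_union, Finset.mem_filter, Finset.mem_univ, true_and,
      Finset.mem_offDiag]
    exact lt_or_lt_iff_ne
  have hdisj : Disjoint (Finset.univ.filter (fun q : Fin d × Fin d => q.1 < q.2))
      (Finset.univ.filter (fun q : Fin d × Fin d => q.2 < q.1)) := by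
    rw [Finset.disjoint_left]
    intro q hq hq'
    simp only [Finset.mem_filter, Finset.mem_univ, true_and] at hq hq'
    exact absurd hq' (not_lt.mpr hq.le)
  have hcu := Finset.card_union_of_disjoint hdisj
  rw [hunion, Finset.offDiag_card, Finset.card_univ, Fintype.card_fin, ← hswap] at hcu
  omega

end cardsec

section decomp
variable {m : Type*} [Fintype m] [DecidableEq m] {d d' : ℕ}

lemma kron_neg {p : Type*} [Fintype p] [DecidableEq p]
    (A : Matrix m m ℂ) (B : Matrix p p ℂ) : A ⊗ₖ (-B) = -(A ⊗ₖ B) := by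
  ext ⟨i, k⟩ ⟨j, l⟩
  simp [kroneckerMap_apply]

lemma GG_decomp (I R : Fin d → Matrix m m ℂ)
    (hRIsq : ∀ j, R j * R j + I j * I j = 1)
    (hIRcomm : ∀ j, I j * R j = R j * I j)
    (γ : Fin (d+1) → Matrix (Fin d') (Fin d') ℂ)
    (hγ2 : ∀ k, γ k * γ k = 1)
    (hγanti : ∀ k l, k ≠ l → γ l * γ k = -(γ k * γ l)) :
    ((∑ j : Fin d, I j ⊗ₖ γ j.castSucc) +
        ((((d : ℂ) - 1) • (1 : Matrix m m ℂ) - ∑ j : Fin d, R j) ⊗ₖ γ (Fin.last d)))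
      * ((∑ j : Fin d, I j ⊗ₖ γ j.castSucc) +
        ((((d : ℂ) - 1) • (1 : Matrix m m ℂ) - ∑ j : Fin d, R j) ⊗ₖ γ (Fin.last d)))
    = 1 + ∑ q ∈ Finset.univ.filter (fun q : Fin d × Fin d => q.1 < q.2),
        (((1 - R q.1) * (1 - R q.2) + (1 - R q.2) * (1 - R q.1)) ⊗ₖ
            (1 : Matrix (Fin d') (Fin d') ℂ)
          + (I q.1 * I q.2 - I q.2 * I q.1) ⊗ₖ (γ q.1.castSucc * γ q.2.castSucc)
          + (I q.1 * (1 - R q.2) - (1 - R q.2) * I q.1) ⊗ₖ (γ q.1.castSucc * γ (Fin.last d))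
          + (I q.2 * (1 - R q.1) - (1 - R q.1) * I q.2) ⊗ₖ (γ q.2.castSucc * γ (Fin.last d))) := by
  classical
  set X : Matrix (m × Fin d') (m × Fin d') ℂ := ∑ j : Fin d, I j ⊗ₖ γ j.castSucc with hX
  set A : Matrix m m ℂ := ((d : ℂ) - 1) • 1 - ∑ j : Fin d, R j with hA
  set Y : Matrix (m × Fin d') (m × Fin d') ℂ := A ⊗ₖ γ (Fin.last d) with hY
  set P : Finset (Fin d × Fin d) :=
    Finset.univ.filter (fun q : Fin d × Fin d => q.1 < q.2) with hP
  set T : Matrix m m ℂ := ∑ j : Fin d, (1 - R j) with hT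
  have hAT : A = T - 1 := by
    rw [hA, hT, Finset.sum_sub_distrib, Finset.sum_const, Finset.card_univ, Fintype.card_fin,
      sub_smul, one_smul, ← Nat.cast_smul_eq_nsmul ℂ]
    abel
  have h1 : (X + Y) * (X + Y) = X * X + (X * Y + Y * X) + Y * Y := by noncomm_ring
  -- X * X
  have hXX : X * X
      = ∑ q ∈ P, ((I q.1 * I q.2 - I q.2 * I q.1) ⊗ₖ (γ q.1.castSucc * γ q.2.castSucc))
        + (∑ j : Fin d, I j * I j) ⊗ₖ (1 : Matrix (Fin d') (Fin d') ℂ) := by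
    rw [hX, Finset.sum_mul_sum]
    have e : ∀ j i : Fin d, (I j ⊗ₖ γ j.castSucc) * (I i ⊗ₖ γ i.castSucc)
        = (I j * I i) ⊗ₖ (γ j.castSucc * γ i.castSucc) := fun j i =>
      (mul_kronecker_mul _ _ _ _).symm
    calc (∑ j : Fin d, ∑ i : Fin d, (I j ⊗ₖ γ j.castSucc) * (I i ⊗ₖ γ i.castSucc))
        = ∑ j : Fin d, ∑ i : Fin d, (I j * I i) ⊗ₖ (γ j.castSucc * γ i.castSucc) := by
          apply Finset.sum_congr rfl; intro j _
          apply Finset.sum_congr rfl; intro i _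
          exact e j i
      _ = (∑ q ∈ P, ((I q.1 * I q.2) ⊗ₖ (γ q.1.castSucc * γ q.2.castSucc)
              + (I q.2 * I q.1) ⊗ₖ (γ q.2.castSucc * γ q.1.castSucc)))
          + ∑ j : Fin d, (I j * I j) ⊗ₖ (γ j.castSucc * γ j.castSucc) := by
          exact sum_pairs (fun j i => (I j * I i) ⊗ₖ (γ j.castSucc * γ i.castSucc))
      _ = ∑ q ∈ P, ((I q.1 * I q.2 - I q.2 * I q.1) ⊗ₖ (γ q.1.castSucc * γ q.2.castSucc))
          + (∑ j : Fin d, I j * I j) ⊗ₖ (1 : Matrix (Fin d') (Fin d') ℂ) := by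
          congr 1
          · apply Finset.sum_congr rfl
            intro q hq
            have hlt : q.1 < q.2 := by
              rw [hP] at hq
              exact (Finset.mem_filter.mp hq).2
            have hne : q.1.castSucc ≠ q.2.castSucc := by
              rw [Ne, Fin.castSucc_inj]
              exact hlt.ne
            rw [hγanti _ _ hne, kron_neg, sub_kron, sub_eq_add_neg]
          · rw [sum_kron]
            apply Finset.sum_congr rfl
            intro j _
            rw [hγ2]
  -- cross terms
  have hXY : X * Y + Y * X
      = ∑ j : Fin d, ((I j * A - A * I j) ⊗ₖ (γ j.castSucc * γ (Fin.last d))) := by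
    rw [hX, hY, Finset.sum_mul, Finset.mul_sum, ← Finset.sum_add_distrib]
    apply Finset.sum_congr rfl
    intro j _
    rw [← mul_kronecker_mul, ← mul_kronecker_mul,
      hγanti j.castSucc (Fin.last d) (Fin.castSucc_lt_last j).ne, kron_neg, sub_kron,
      sub_eq_add_neg]
  have hYY : Y * Y = (A * A) ⊗ₖ (1 : Matrix (Fin d') (Fin d') ℂ) := by
    rw [hY, ← mul_kronecker_mul, hγ2]
  -- scalar identity
  have hTT : T * T = (∑ q ∈ P, ((1 - R q.1) * (1 - R q.2) + (1 - R q.2) * (1 - R q.1)))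
      + ∑ j : Fin d, (1 - R j) * (1 - R j) := by
    rw [hT, Finset.sum_mul_sum]
    exact sum_pairs (fun j i => (1 - R j) * (1 - R i))
  have hE : (∑ j : Fin d, I j * I j) + A * A
      = 1 + ∑ q ∈ P, ((1 - R q.1) * (1 - R q.2) + (1 - R q.2) * (1 - R q.1)) := by
    have hA2 : A * A = T * T - T - T + 1 := by rw [hAT]; noncomm_ring
    have hIj : ∀ j, I j * I j = ((1 - R j) + (1 - R j)) - (1 - R j) * (1 - R j) := by
      intro j
      have h := hRIsq j
      have h2 : I j * I j = 1 - R j * R j := by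
        rw [← h]; abel
      rw [h2]; noncomm_ring
    have hsum : (∑ j : Fin d, I j * I j)
        = (T + T) - ∑ j : Fin d, (1 - R j) * (1 - R j) := by
      rw [Finset.sum_congr rfl (fun j _ => hIj j), Finset.sum_sub_distrib,
        Finset.sum_add_distrib, hT]
    rw [hsum, hA2, hTT]
    abel
  -- the mixed commutator sum over pairs
  have hcommsum : ∑ j : Fin d, ((I j * A - A * I j) ⊗ₖ (γ j.castSucc * γ (Fin.last d)))
      = ∑ q ∈ P,
          ((I q.1 * (1 - R q.2) - (1 - R q.2) * I q.1) ⊗ₖ (γ q.1.castSucc * γ (Fin.last d))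
          + (I q.2 * (1 - R q.1) - (1 - R q.1) * I q.2) ⊗ₖ (γ q.2.castSucc * γ (Fin.last d))) := by
    have hIA : ∀ j, I j * A - A * I j = ∑ i : Fin d, (I j * (1 - R i) - (1 - R i) * I j) := by
      intro j
      rw [hAT, hT, mul_sub, sub_mul, mul_one, one_mul, Finset.mul_sum, Finset.sum_mul,
        Finset.sum_sub_distrib]
      abel
    calc ∑ j : Fin d, ((I j * A - A * I j) ⊗ₖ (γ j.castSucc * γ (Fin.last d)))
        = ∑ j : Fin d, ∑ i : Fin d,
            ((I j * (1 - R i) - (1 - R i) * I j) ⊗ₖ (γ j.castSucc * γ (Fin.last d))) := by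
          apply Finset.sum_congr rfl
          intro j _
          rw [hIA j, sum_kron]
      _ = (∑ q ∈ P,
            ((I q.1 * (1 - R q.2) - (1 - R q.2) * I q.1) ⊗ₖ (γ q.1.castSucc * γ (Fin.last d))
            + (I q.2 * (1 - R q.1) - (1 - R q.1) * I q.2) ⊗ₖ (γ q.2.castSucc * γ (Fin.last d))))
          + ∑ j : Fin d,
            ((I j * (1 - R j) - (1 - R j) * I j) ⊗ₖ (γ j.castSucc * γ (Fin.last d))) :=
          sum_pairs (fun j i =>
            (I j * (1 - R i) - (1 - R i) * I j) ⊗ₖ (γ j.castSucc * γ (Fin.last d)))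
      _ = ∑ q ∈ P,
            ((I q.1 * (1 - R q.2) - (1 - R q.2) * I q.1) ⊗ₖ (γ q.1.castSucc * γ (Fin.last d))
            + (I q.2 * (1 - R q.1) - (1 - R q.1) * I q.2) ⊗ₖ (γ q.2.castSucc * γ (Fin.last d))) := by
          have hz : ∀ j : Fin d,
              (I j * (1 - R j) - (1 - R j) * I j) ⊗ₖ (γ j.castSucc * γ (Fin.last d)) = 0 := by
            intro j
            have h0 : I j * (1 - R j) - (1 - R j) * I j = 0 := by
              have := hIRcomm j
              rw [mul_sub, sub_mul, mul_one, one_mul, this]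
              abel
            rw [h0, zero_kronecker]
          rw [Finset.sum_congr rfl (fun j _ => hz j), Finset.sum_const_zero, add_zero]
  -- final assembly
  rw [h1, hXX, hXY, hYY, hcommsum]
  calc (∑ q ∈ P, ((I q.1 * I q.2 - I q.2 * I q.1) ⊗ₖ (γ q.1.castSucc * γ q.2.castSucc))
        + (∑ j : Fin d, I j * I j) ⊗ₖ (1 : Matrix (Fin d') (Fin d') ℂ))
      + (∑ q ∈ P,
          ((I q.1 * (1 - R q.2) - (1 - R q.2) * I q.1) ⊗ₖ (γ q.1.castSucc * γ (Fin.last d))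
          + (I q.2 * (1 - R q.1) - (1 - R q.1) * I q.2) ⊗ₖ (γ q.2.castSucc * γ (Fin.last d))))
      + (A * A) ⊗ₖ (1 : Matrix (Fin d') (Fin d') ℂ)
      = ((∑ j : Fin d, I j * I j) + A * A) ⊗ₖ (1 : Matrix (Fin d') (Fin d') ℂ)
        + (∑ q ∈ P, ((I q.1 * I q.2 - I q.2 * I q.1) ⊗ₖ (γ q.1.castSucc * γ q.2.castSucc))
        + ∑ q ∈ P,
          ((I q.1 * (1 - R q.2) - (1 - R q.2) * I q.1) ⊗ₖ (γ q.1.castSucc * γ (Fin.last d))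
          + (I q.2 * (1 - R q.1) - (1 - R q.1) * I q.2) ⊗ₖ (γ q.2.castSucc * γ (Fin.last d)))) := by
        rw [add_kronecker]
        abel
    _ = 1 + (∑ q ∈ P, (((1 - R q.1) * (1 - R q.2) + (1 - R q.2) * (1 - R q.1)) ⊗ₖ
            (1 : Matrix (Fin d') (Fin d') ℂ))
          + (∑ q ∈ P, ((I q.1 * I q.2 - I q.2 * I q.1) ⊗ₖ (γ q.1.castSucc * γ q.2.castSucc))
          + ∑ q ∈ P,
            ((I q.1 * (1 - R q.2) - (1 - R q.2) * I q.1) ⊗ₖ (γ q.1.castSucc * γ (Fin.last d))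
            + (I q.2 * (1 - R q.1) - (1 - R q.1) * I q.2) ⊗ₖ (γ q.2.castSucc * γ (Fin.last d))))) := by
        rw [hE, add_kronecker, one_kronecker_one, sum_kron]
        abel
    _ = 1 + ∑ q ∈ P,
          (((1 - R q.1) * (1 - R q.2) + (1 - R q.2) * (1 - R q.1)) ⊗ₖ
              (1 : Matrix (Fin d') (Fin d') ℂ)
            + (I q.1 * I q.2 - I q.2 * I q.1) ⊗ₖ (γ q.1.castSucc * γ q.2.castSucc)
            + (I q.1 * (1 - R q.2) - (1 - R q.2) * I q.1) ⊗ₖ (γ q.1.castSucc * γ (Fin.last d))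
            + (I q.2 * (1 - R q.1) - (1 - R q.1) * I q.2) ⊗ₖ (γ q.2.castSucc * γ (Fin.last d))) := by
        congr 1
        rw [← Finset.sum_add_distrib, ← Finset.sum_add_distrib]
        apply Finset.sum_congr rfl
        intro q _
        abel

end decomp

section perpair
variable {n d' : ℕ}

lemma neg_kron_neg {m p : Type*} [Fintype m] [DecidableEq m] [Fintype p] [DecidableEq p]
    (A : Matrix m m ℂ) (B : Matrix p p ℂ) : (-A) ⊗ₖ (-B) = A ⊗ₖ B := by
  ext ⟨i, k⟩ ⟨j, l⟩
  simp [kroneckerMap_apply]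

lemma herm_kron_of_skew {m p : Type*} [Fintype m] [DecidableEq m] [Fintype p] [DecidableEq p]
    {A : Matrix m m ℂ} {B : Matrix p p ℂ} (hA : Aᴴ = -A) (hB : Bᴴ = -B) :
    (A ⊗ₖ B).IsHermitian := by
  rw [Matrix.IsHermitian, kron_conjTranspose, hA, hB, neg_kron_neg]

lemma skew_comm {m : Type*} [Fintype m] [DecidableEq m] {A B : Matrix m m ℂ}
    (hA : A.IsHermitian) (hB : B.IsHermitian) : (A * B - B * A)ᴴ = -(A * B - B * A) := by
  rw [conjTranspose_sub, conjTranspose_mul, conjTranspose_mul, hA.eq, hB.eq, neg_sub]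

lemma Zq_psd {Uj Ui : Matrix (Fin n) (Fin n) ℂ}
    (hUj1 : Uj * Ujᴴ = 1) (hUj2 : Ujᴴ * Uj = 1)
    (hUi1 : Ui * Uiᴴ = 1) (hUi2 : Uiᴴ * Ui = 1)
    {γa γb γc : Matrix (Fin d') (Fin d') ℂ}
    (hγa : γa.IsHermitian) (hγb : γb.IsHermitian) (hγc : γc.IsHermitian)
    (hna : ‖γa‖ ≤ 1) (hnb : ‖γb‖ ≤ 1) (hnc : ‖γc‖ ≤ 1)
    (hba : γb * γa = -(γa * γb)) (hca : γc * γa = -(γa * γc)) (hcb : γc * γb = -(γb * γc)) :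
    ((((1 - mRe Uj) * (1 - mRe Ui) + (1 - mRe Ui) * (1 - mRe Uj)) ⊗ₖ
        (1 : Matrix (Fin d') (Fin d') ℂ)
      + (mIm Uj * mIm Ui - mIm Ui * mIm Uj) ⊗ₖ (γa * γb)
      + (mIm Uj * (1 - mRe Ui) - (1 - mRe Ui) * mIm Uj) ⊗ₖ (γa * γc)
      + (mIm Ui * (1 - mRe Uj) - (1 - mRe Uj) * mIm Ui) ⊗ₖ (γb * γc)
      + ((7 * ‖Uj * Ui - Ui * Uj‖ : ℝ) : ℂ) • 1).PosSemidef) := by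
  set Sj : Matrix (Fin n) (Fin n) ℂ := 1 - mRe Uj with hSj
  set Si : Matrix (Fin n) (Fin n) ℂ := 1 - mRe Ui with hSi
  set Vi : Matrix (Fin n) (Fin n) ℂ := 1 - Ui with hVi
  set δ : ℝ := ‖Uj * Ui - Ui * Uj‖ with hδ
  have hδ0 : 0 ≤ δ := norm_nonneg _
  have hSjH : Sj.IsHermitian := by
    rw [hSj]; exact Matrix.isHermitian_one.sub (mRe_herm Uj)
  have hSiH : Si.IsHermitian := by
    rw [hSi]; exact Matrix.isHermitian_one.sub (mRe_herm Ui)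
  have hSjPSD : Sj.PosSemidef := by
    have h := posSemidef_smul_one_add (c := 1) (H := -(mRe Uj)) (mRe_herm Uj).neg
      (by rw [norm_neg]; exact norm_mRe_le hUj1 hUj2)
    rw [Complex.ofReal_one, one_smul, ← sub_eq_add_neg] at h
    exact h
  have hViT : Viᴴ = 1 - Uiᴴ := by rw [hVi, conjTranspose_sub, conjTranspose_one]
  have hVV : Si = (1/2 : ℂ) • (Viᴴ * Vi) := by
    rw [hViT, hVi, hSi]
    have h2 : (1 - Uiᴴ) * (1 - Ui) = 1 - Ui - Uiᴴ + Uiᴴ * Ui := by noncomm_ring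
    rw [h2, hUi2, mRe]
    module
  -- norm estimates
  have hcomm1 : ‖Sj * Viᴴ - Viᴴ * Sj‖ ≤ δ := by
    have e : Sj * Viᴴ - Viᴴ * Sj = mRe Uj * Uiᴴ - Uiᴴ * mRe Uj := by
      rw [hSj, hViT]; noncomm_ring
    rw [e]; exact comm_mRe_conj hUj1 hUj2 hUi1 hUi2
  have hcomm2 : ‖Vi * Sj - Sj * Vi‖ ≤ δ := by
    have e : Vi * Sj - Sj * Vi = -(mRe Uj * Ui - Ui * mRe Uj) := by
      rw [hSj, hVi]; noncomm_ring
    rw [e, norm_neg]; exact comm_mRe_left hUj1 hUj2 Ui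
  have hcommII : ‖mIm Uj * mIm Ui - mIm Ui * mIm Uj‖ ≤ δ := comm_mIm_mIm hUj1 hUj2 hUi1 hUi2
  have hcommIS1 : ‖mIm Uj * Si - Si * mIm Uj‖ ≤ δ := by
    have e : mIm Uj * Si - Si * mIm Uj = -(mIm Uj * mRe Ui - mRe Ui * mIm Uj) := by
      rw [hSi]; noncomm_ring
    rw [e, norm_neg]; exact comm_mIm_mRe hUj1 hUj2 hUi1 hUi2
  have hcommIS2 : ‖mIm Ui * Sj - Sj * mIm Ui‖ ≤ δ := by
    have e : mIm Ui * Sj - Sj * mIm Ui = -(mIm Ui * mRe Uj - mRe Uj * mIm Ui) := by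
      rw [hSj]; noncomm_ring
    rw [e, norm_neg]
    have h := comm_mIm_mRe hUi1 hUi2 hUj1 hUj2
    rwa [show ‖Ui * Uj - Uj * Ui‖ = δ by rw [hδ, ← neg_sub, norm_neg]] at h
  have hVn : ‖Vi‖ ≤ 2 := by
    rw [hVi]
    have h1 := norm_sub_le (1 : Matrix (Fin n) (Fin n) ℂ) Ui
    have h2 : ‖(1 : Matrix (Fin n) (Fin n) ℂ)‖ ≤ 1 := norm_one_le
    have h3 : ‖Ui‖ ≤ 1 := norm_le_one_of_unitary hUi2
    linarith
  have hVhn : ‖Viᴴ‖ ≤ 2 := by rw [l2_opNorm_conjTranspose]; exact hVn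
  -- the error term H
  set H : Matrix (Fin n) (Fin n) ℂ :=
    (1/2 : ℂ) • ((Sj * Viᴴ - Viᴴ * Sj) * Vi + Viᴴ * (Vi * Sj - Sj * Vi)) with hH
  have hanti : Sj * Si + Si * Sj = Viᴴ * Sj * Vi + H := by
    rw [hVV, mul_smul_comm, smul_mul_assoc, ← smul_add]
    have hdup : Viᴴ * Sj * Vi = (1/2 : ℂ) • (Viᴴ * Sj * Vi + Viᴴ * Sj * Vi) := by
      rw [← two_smul ℂ, smul_smul]; norm_num
    rw [hH, hdup, ← smul_add]
    congr 1
    noncomm_ring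
  have hHherm : H.IsHermitian := by
    have e : H = (Sj * Si + Si * Sj) - Viᴴ * Sj * Vi := by
      rw [hanti]; abel
    rw [e]
    have h1 : (Sj * Si + Si * Sj).IsHermitian := by
      rw [Matrix.IsHermitian, conjTranspose_add, conjTranspose_mul, conjTranspose_mul,
        hSjH.eq, hSiH.eq, add_comm]
    exact h1.sub (isHermitian_conjTranspose_mul_mul Vi hSjH)
  have hHnorm : ‖H‖ ≤ 2 * δ := by
    rw [hH, norm_smul, norm_half]
    have h1 : ‖(Sj * Viᴴ - Viᴴ * Sj) * Vi‖ ≤ δ * 2 :=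
      (l2_opNorm_mul _ _).trans (mul_le_mul hcomm1 hVn (norm_nonneg _) hδ0)
    have h2 : ‖Viᴴ * (Vi * Sj - Sj * Vi)‖ ≤ 2 * δ := by
      refine (l2_opNorm_mul _ _).trans ?_
      exact mul_le_mul hVhn hcomm2 (norm_nonneg _) (by norm_num)
    have h3 := norm_add_le ((Sj * Viᴴ - Viᴴ * Sj) * Vi) (Viᴴ * (Vi * Sj - Sj * Vi))
    linarith
  -- pieces
  have T1psd : ((Viᴴ * Sj * Vi) ⊗ₖ (1 : Matrix (Fin d') (Fin d') ℂ)).PosSemidef :=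
    posSemidef_kron (hSjPSD.conjTranspose_mul_mul_same Vi) Matrix.PosSemidef.one
  have T2psd : ((((2 * δ : ℝ) : ℂ) • 1 + H) ⊗ₖ (1 : Matrix (Fin d') (Fin d') ℂ)).PosSemidef :=
    posSemidef_kron (posSemidef_smul_one_add hHherm (by push_cast at hHnorm ⊢; linarith))
      Matrix.PosSemidef.one
  -- kron pieces with γ's
  have habn : ‖γa * γb‖ ≤ 1 :=
    (l2_opNorm_mul _ _).trans (mul_le_one₀ hna (norm_nonneg _) hnb)
  have hacn : ‖γa * γc‖ ≤ 1 :=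
    (l2_opNorm_mul _ _).trans (mul_le_one₀ hna (norm_nonneg _) hnc)
  have hbcn : ‖γb * γc‖ ≤ 1 :=
    (l2_opNorm_mul _ _).trans (mul_le_one₀ hnb (norm_nonneg _) hnc)
  have hγabskew : (γa * γb)ᴴ = -(γa * γb) := by
    rw [conjTranspose_mul, hγa.eq, hγb.eq, hba]
  have hγacskew : (γa * γc)ᴴ = -(γa * γc) := by
    rw [conjTranspose_mul, hγa.eq, hγc.eq, hca]
  have hγbcskew : (γb * γc)ᴴ = -(γb * γc) := by
    rw [conjTranspose_mul, hγb.eq, hγc.eq, hcb]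
  have T3psd : ((δ : ℂ) • 1
      + (mIm Uj * mIm Ui - mIm Ui * mIm Uj) ⊗ₖ (γa * γb)).PosSemidef := by
    apply posSemidef_smul_one_add
    · exact herm_kron_of_skew (skew_comm (mIm_herm Uj) (mIm_herm Ui)) hγabskew
    · refine (kron_norm_le _ _).trans ?_
      calc ‖mIm Uj * mIm Ui - mIm Ui * mIm Uj‖ * ‖γa * γb‖
          ≤ δ * 1 := mul_le_mul hcommII habn (norm_nonneg _) hδ0
        _ = δ := mul_one δ
  have T4psd : ((δ : ℂ) • 1
      + (mIm Uj * Si - Si * mIm Uj) ⊗ₖ (γa * γc)).PosSemidef := by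
    apply posSemidef_smul_one_add
    · exact herm_kron_of_skew (skew_comm (mIm_herm Uj) hSiH) hγacskew
    · refine (kron_norm_le _ _).trans ?_
      calc ‖mIm Uj * Si - Si * mIm Uj‖ * ‖γa * γc‖
          ≤ δ * 1 := mul_le_mul hcommIS1 hacn (norm_nonneg _) hδ0
        _ = δ := mul_one δ
  have T5psd : ((δ : ℂ) • 1
      + (mIm Ui * Sj - Sj * mIm Ui) ⊗ₖ (γb * γc)).PosSemidef := by
    apply posSemidef_smul_one_add
    · exact herm_kron_of_skew (skew_comm (mIm_herm Ui) hSjH) hγbcskew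
    · refine (kron_norm_le _ _).trans ?_
      calc ‖mIm Ui * Sj - Sj * mIm Ui‖ * ‖γb * γc‖
          ≤ δ * 1 := mul_le_mul hcommIS2 hbcn (norm_nonneg _) hδ0
        _ = δ := mul_one δ
  have T6psd : (((2 * δ : ℝ) : ℂ) •
      (1 : Matrix (Fin n × Fin d') (Fin n × Fin d') ℂ)).PosSemidef :=
    posSemidef_real_smul Matrix.PosSemidef.one (by positivity)
  -- assemble
  have key : (Sj * Si + Si * Sj) ⊗ₖ (1 : Matrix (Fin d') (Fin d') ℂ)
      + (mIm Uj * mIm Ui - mIm Ui * mIm Uj) ⊗ₖ (γa * γb)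
      + (mIm Uj * Si - Si * mIm Uj) ⊗ₖ (γa * γc)
      + (mIm Ui * Sj - Sj * mIm Ui) ⊗ₖ (γb * γc)
      + ((7 * δ : ℝ) : ℂ) • 1
      = ((Viᴴ * Sj * Vi) ⊗ₖ (1 : Matrix (Fin d') (Fin d') ℂ)
          + (((2 * δ : ℝ) : ℂ) • 1 + H) ⊗ₖ (1 : Matrix (Fin d') (Fin d') ℂ))
        + ((δ : ℂ) • 1 + (mIm Uj * mIm Ui - mIm Ui * mIm Uj) ⊗ₖ (γa * γb))
        + ((δ : ℂ) • 1 + (mIm Uj * Si - Si * mIm Uj) ⊗ₖ (γa * γc))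
        + ((δ : ℂ) • 1 + (mIm Ui * Sj - Sj * mIm Ui) ⊗ₖ (γb * γc))
        + ((2 * δ : ℝ) : ℂ) • (1 : Matrix (Fin n × Fin d') (Fin n × Fin d') ℂ) := by
    rw [hanti]
    simp only [add_kronecker, smul_kronecker, one_kronecker_one]
    have hscal : ((7 * δ : ℝ) : ℂ) • (1 : Matrix (Fin n × Fin d') (Fin n × Fin d') ℂ)
        = ((2 * δ : ℝ) : ℂ) • 1 + (δ : ℂ) • 1 + (δ : ℂ) • 1 + (δ : ℂ) • 1
          + ((2 * δ : ℝ) : ℂ) • 1 := by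
      rw [← add_smul, ← add_smul, ← add_smul, ← add_smul]
      congr 1
      push_cast
      ring
    rw [hscal]
    abel
  rw [key]
  exact ((((T1psd.add T2psd).add T3psd).add T4psd).add T5psd).add T6psd

end perpair

end CliffordAux


open CliffordAux

/-- for unitaries `U_1, …, U_d` and a selfadjoint Clifford family
`γ_1, …, γ_{d+1}`, the matrix `G = ∑ Im(U_j) ⊗ γ_j + ((d-1)·1 - ∑ Re(U_j)) ⊗ γ_{d+1}`
satisfies `G² ≥ (1 - 7 ∑_{j<i} ‖[U_j, U_i]‖)·1`; in particular `G` is invertible if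
`‖[U_j, U_i]‖ ≤ δ` for all `i ≠ j` and `1 - 7δ d(d-1)/2 > 0`. -/
theorem stmt0 {n d' : ℕ} (d : ℕ) (hd : 1 ≤ d)
    (U : Fin d → Matrix (Fin n) (Fin n) ℂ)
    (hU : ∀ j, U j * (U j)ᴴ = 1 ∧ (U j)ᴴ * U j = 1)
    (γ : Fin (d+1) → Matrix (Fin d') (Fin d') ℂ)
    (hγherm : ∀ k, (γ k).IsHermitian)
    (hγcliff : ∀ k l, γ k * γ l + γ l * γ k = (if k = l then (2:ℂ) else 0) • 1)
    (G : Matrix (Fin n × Fin d') (Fin n × Fin d') ℂ)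
    (hG : G = (∑ j : Fin d, mIm (U j) ⊗ₖ γ j.castSucc) +
      ((((d : ℂ) - 1) • (1 : Matrix (Fin n) (Fin n) ℂ) - ∑ j : Fin d, mRe (U j)) ⊗ₖ
        γ (Fin.last d))) :
    (G * G - ((1 - 7 * ∑ p ∈ Finset.univ.filter (fun p : Fin d × Fin d => p.1 < p.2),
        ‖U p.1 * U p.2 - U p.2 * U p.1‖ : ℝ) : ℂ) • 1).PosSemidef ∧
    (∀ δ : ℝ, (∀ i j, i ≠ j → ‖U i * U j - U j * U i‖ ≤ δ) →
      0 < 1 - 7 * δ * d * (d - 1) / 2 → IsUnit G) := by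
  classical
  have hU1 : ∀ j, U j * (U j)ᴴ = 1 := fun j => (hU j).1
  have hU2 : ∀ j, (U j)ᴴ * U j = 1 := fun j => (hU j).2
  set P : Finset (Fin d × Fin d) :=
    Finset.univ.filter (fun p : Fin d × Fin d => p.1 < p.2) with hPdef
  set C : ℝ := ∑ p ∈ P, ‖U p.1 * U p.2 - U p.2 * U p.1‖ with hCdef
  -- Clifford facts
  have hγ2 : ∀ k, γ k * γ k = 1 := by
    intro k
    have h := hγcliff k k
    rw [if_pos rfl] at h
    apply half_eq
    rw [h, show (2:ℂ) = 1 + 1 by norm_num, add_smul, one_smul]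
  have hγanti : ∀ k l, k ≠ l → γ l * γ k = -(γ k * γ l) := by
    intro k l hkl
    have h := hγcliff k l
    rw [if_neg hkl, zero_smul] at h
    exact eq_neg_of_add_eq_zero_right h
  have hγnorm : ∀ k, ‖γ k‖ ≤ 1 := by
    intro k
    apply norm_le_one_of_unitary
    rw [(hγherm k).eq, hγ2]
  have hRIsq : ∀ j, mRe (U j) * mRe (U j) + mIm (U j) * mIm (U j) = 1 :=
    fun j => mRe_sq_add_mIm_sq (hU1 j) (hU2 j)
  have hIRcomm : ∀ j, mIm (U j) * mRe (U j) = mRe (U j) * mIm (U j) :=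
    fun j => sub_eq_zero.mp (comm_mIm_mRe_self (hU1 j) (hU2 j))
  -- Part 1
  have part1 : (G * G - ((1 - 7 * C : ℝ) : ℂ) • 1).PosSemidef := by
    have hGG : G * G = 1 + ∑ q ∈ P,
        (((1 - mRe (U q.1)) * (1 - mRe (U q.2)) + (1 - mRe (U q.2)) * (1 - mRe (U q.1))) ⊗ₖ
            (1 : Matrix (Fin d') (Fin d') ℂ)
          + (mIm (U q.1) * mIm (U q.2) - mIm (U q.2) * mIm (U q.1)) ⊗ₖ
              (γ q.1.castSucc * γ q.2.castSucc)
          + (mIm (U q.1) * (1 - mRe (U q.2)) - (1 - mRe (U q.2)) * mIm (U q.1)) ⊗ₖ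
              (γ q.1.castSucc * γ (Fin.last d))
          + (mIm (U q.2) * (1 - mRe (U q.1)) - (1 - mRe (U q.1)) * mIm (U q.2)) ⊗ₖ
              (γ q.2.castSucc * γ (Fin.last d))) := by
      rw [hG]
      exact GG_decomp (fun j => mIm (U j)) (fun j => mRe (U j)) hRIsq hIRcomm γ hγ2 hγanti
    rw [hGG]
    have hscal : ((1 - 7 * C : ℝ) : ℂ) • (1 : Matrix (Fin n × Fin d') (Fin n × Fin d') ℂ)
        = 1 - ∑ q ∈ P, ((7 * ‖U q.1 * U q.2 - U q.2 * U q.1‖ : ℝ) : ℂ) • 1 := by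
      have hco : ((1 - 7 * C : ℝ) : ℂ)
          = 1 - ∑ q ∈ P, ((7 * ‖U q.1 * U q.2 - U q.2 * U q.1‖ : ℝ) : ℂ) := by
        rw [hCdef]
        push_cast
        rw [Finset.mul_sum]
      rw [hco, sub_smul, one_smul, Finset.sum_smul]
    rw [hscal]
    have hred : ∀ B S1 : Matrix (Fin n × Fin d') (Fin n × Fin d') ℂ,
        1 + B - (1 - S1) = B + S1 := by
      intro B S1; abel
    rw [hred, ← Finset.sum_add_distrib]
    apply CliffordAux.posSemidef_sum
    intro q hq
    have hlt : q.1 < q.2 := by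
      rw [hPdef] at hq
      exact (Finset.mem_filter.mp hq).2
    have hneab : q.1.castSucc ≠ q.2.castSucc := by
      rw [Ne, Fin.castSucc_inj]; exact hlt.ne
    exact Zq_psd (hU1 q.1) (hU2 q.1) (hU1 q.2) (hU2 q.2)
      (hγherm _) (hγherm _) (hγherm _) (hγnorm _) (hγnorm _) (hγnorm _)
      (hγanti _ _ hneab)
      (hγanti _ _ (Fin.castSucc_lt_last q.1).ne)
      (hγanti _ _ (Fin.castSucc_lt_last q.2).ne)
  refine ⟨part1, ?_⟩
  -- Part 2
  intro δ0 hδbound hpos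
  have hcard := card_pairs d
  rw [← hPdef] at hcard
  have hCle : C ≤ δ0 * P.card := by
    rw [hCdef]
    have h := Finset.sum_le_card_nsmul P (fun p => ‖U p.1 * U p.2 - U p.2 * U p.1‖) δ0 ?_
    · rw [nsmul_eq_mul] at h
      linarith [h]
    · intro p hp
      have hlt : p.1 < p.2 := by
        rw [hPdef] at hp
        exact (Finset.mem_filter.mp hp).2
      exact hδbound p.1 p.2 hlt.ne
  have hcardR : (P.card : ℝ) = ((d : ℝ) * d - d) / 2 := by
    have hle : d ≤ d * d := Nat.le_mul_of_pos_left d (by omega)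
    have h2 : ((2 * P.card : ℕ) : ℝ) = ((d * d - d : ℕ) : ℝ) := by rw [hcard]
    rw [Nat.cast_sub hle] at h2
    push_cast at h2
    linarith
  have hδ0nonneg : 0 ≤ δ0 ∨ P.card = 0 := by
    by_cases hcard0 : P.card = 0
    · exact Or.inr hcard0
    · left
      obtain ⟨p, hp⟩ := Finset.card_pos.mp (Nat.pos_of_ne_zero hcard0)
      have hlt : p.1 < p.2 := by
        rw [hPdef] at hp
        exact (Finset.mem_filter.mp hp).2
      exact (norm_nonneg _).trans (hδbound p.1 p.2 hlt.ne)
  have hfin : 0 < 1 - 7 * C := by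
    have h7 : 7 * C ≤ 7 * (δ0 * P.card) := by linarith
    have hval : 7 * (δ0 * (P.card : ℝ)) = 7 * δ0 * ((d : ℝ) * d - d) / 2 := by
      rw [hcardR]; ring
    have hdd : (7 : ℝ) * δ0 * d * ((d : ℝ) - 1) / 2 = 7 * δ0 * ((d : ℝ) * d - d) / 2 := by
      ring
    rw [hdd] at hpos
    linarith [hval ▸ h7]
  by_contra hnot
  rw [Matrix.isUnit_iff_isUnit_det, isUnit_iff_ne_zero, ne_eq, not_not] at hnot
  obtain ⟨v, hv0, hGv⟩ := (Matrix.exists_mulVec_eq_zero_iff).mpr hnot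
  have h := part1.dotProduct_mulVec_nonneg v
  rw [sub_mulVec, dotProduct_sub, ← mulVec_mulVec, hGv, mulVec_zero, dotProduct_zero,
    smul_mulVec, one_mulVec, dotProduct_smul, smul_eq_mul, zero_sub] at h
  have hvpos : 0 < star v ⬝ᵥ v := Matrix.dotProduct_star_self_pos_iff.mpr hv0
  have hcpos : (0 : ℂ) < ((1 - 7 * C : ℝ) : ℂ) := Complex.zero_lt_real.mpr hfin
  have hprod := mul_pos hcpos hvpos
  have hle := neg_nonneg.mp h
  exact absurd (hprod.trans_le hle) (lt_irrefl 0)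
end
end

section
/- Let d ≥ 1 and let U_1, …, U_d ∈ M_n(ℂ) be pairwise commuting unitary matrices, and let γ_1, …, γ_{d+1} ∈ M_{d'}(ℂ) be a selfadjoint Clifford family. Then the Hermitian matrix G = ∑_{j=1}^d Im(U_j) ⊗ γ_j + ((d−1)·1 − ∑_{j=1}^d Re(U_j)) ⊗ γ_{d+1} is invertible and Sig(G) = 0. -/
open Matrix
open scoped Kronecker Matrix.Norms.L2Operator ComplexOrder

noncomputable section

/-- The signature of a Hermitian matrix: number of positive eigenvalues minus the
number of negative eigenvalues, counted with multiplicity (junk value `0` if the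
matrix is not Hermitian). -/
def matSig {m : Type*} [Fintype m] [DecidableEq m] (B : Matrix m m ℂ) : ℤ :=
  if hB : B.IsHermitian then
    ((Finset.univ.filter fun i => 0 < hB.eigenvalues i).card : ℤ) -
    ((Finset.univ.filter fun i => hB.eigenvalues i < 0).card : ℤ)
  else 0

lemma kron_conjT {m p : Type*} [Fintype m] [Fintype p] (A : Matrix m m ℂ) (B : Matrix p p ℂ) :
    (A ⊗ₖ B)ᴴ = Aᴴ ⊗ₖ Bᴴ := by
  ext ⟨i, j⟩ ⟨k, l⟩
  simp [conjTranspose_apply, kroneckerMap_apply, mul_comm]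

/-- commuting unitaries commute with adjoints -/
lemma commH {n : ℕ} {d : ℕ} (U : Fin d → Matrix (Fin n) (Fin n) ℂ)
    (hU : ∀ j, U j * (U j)ᴴ = 1) (hcomm : ∀ i j, U i * U j = U j * U i) (i j : Fin d) :
    (U i)ᴴ * U j = U j * (U i)ᴴ := by
  have h1 : (U i)ᴴ * U i = 1 := mul_eq_one_comm.mp (hU i)
  calc (U i)ᴴ * U j
      = (U i)ᴴ * U j * (U i * (U i)ᴴ) := by rw [hU i, mul_one]
    _ = (U i)ᴴ * (U j * U i) * (U i)ᴴ := by noncomm_ring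
    _ = (U i)ᴴ * (U i * U j) * (U i)ᴴ := by rw [hcomm j i]
    _ = ((U i)ᴴ * U i) * (U j * (U i)ᴴ) := by noncomm_ring
    _ = U j * (U i)ᴴ := by rw [h1, one_mul]

/-- Parity obstruction for commuting unitaries with a "real" joint vector. -/
lemma parity_ind {n : ℕ} : ∀ (d : ℕ) (U : Fin d → Matrix (Fin n) (Fin n) ℂ),
    (∀ j, U j * (U j)ᴴ = 1) → (∀ i j, U i * U j = U j * U i) →
    ∀ (v : Fin n → ℂ), v ≠ 0 → (∀ j, U j *ᵥ v = (U j)ᴴ *ᵥ v) →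
    ∀ (c : ℤ), (∑ j, U j *ᵥ v) = (c : ℂ) • v → Odd (c + d) → False := by
  intro d
  induction d with
  | zero =>
    intro U hU hcomm v hv hvU c hsum hodd
    simp only [Finset.univ_eq_empty, Finset.sum_empty] at hsum
    obtain ⟨i, hi⟩ := Function.ne_iff.mp hv
    have h0 : (c : ℂ) * v i = 0 := by
      have := congr_fun hsum.symm i
      simpa [Pi.smul_apply] using this
    have hc : (c : ℂ) = 0 := by
      rcases mul_eq_zero.mp h0 with h | h
      · exact h
      · exact absurd h hi
    have : c = 0 := by exact_mod_cast hc
    subst this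
    simp at hodd
  | succ d ih =>
    intro U hU hcomm v hv hvU c hsum hodd
    set u := U (Fin.last d) with hu
    set W : Fin d → Matrix (Fin n) (Fin n) ℂ := fun j => U (Fin.castSucc j) with hW
    have hWu : ∀ j, W j * (W j)ᴴ = 1 := fun j => hU _
    have hWcomm : ∀ i j, W i * W j = W j * W i := fun i j => hcomm _ _
    have huu : u *ᵥ (u *ᵥ v) = v := by
      rw [hvU (Fin.last d), mulVec_mulVec, hU (Fin.last d), one_mulVec]
    have hsplit : (∑ j : Fin d, W j *ᵥ v) = (c : ℂ) • v - u *ᵥ v := by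
      rw [Fin.sum_univ_castSucc] at hsum
      exact eq_sub_of_add_eq hsum
    have hWv : ∀ j, W j *ᵥ (u *ᵥ v) = u *ᵥ (W j *ᵥ v) := by
      intro j
      rw [mulVec_mulVec, mulVec_mulVec, hcomm]
    have hWHv : ∀ j, (W j)ᴴ *ᵥ (u *ᵥ v) = u *ᵥ ((W j)ᴴ *ᵥ v) := by
      intro j
      rw [mulVec_mulVec, mulVec_mulVec, commH U hU hcomm]
    have key : ∀ (η : ℂ), (η = 1 ∨ η = -1) → (v + η • (u *ᵥ v)) ≠ 0 →
        ∀ c' : ℤ, (c' : ℂ) = (c : ℂ) - η → Odd (c' + d) → False := by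
      intro η hη hne c' hc' hodd'
      set v' : Fin n → ℂ := v + η • (u *ᵥ v) with hv'
      have hWv' : ∀ j, W j *ᵥ v' = (W j)ᴴ *ᵥ v' := by
        intro j
        rw [hv', mulVec_add, mulVec_add, mulVec_smul, mulVec_smul, hWv, hWHv,
          hvU (Fin.castSucc j)]
      have hsum' : (∑ j : Fin d, W j *ᵥ v') = ((c : ℂ) - η) • v' := by
        calc (∑ j : Fin d, W j *ᵥ v')
            = ∑ j : Fin d, (W j *ᵥ v + η • (u *ᵥ (W j *ᵥ v))) := by
              simp only [hv', mulVec_add, mulVec_smul, hWv]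
          _ = (∑ j : Fin d, W j *ᵥ v) + η • (u *ᵥ (∑ j : Fin d, W j *ᵥ v)) := by
              rw [Finset.sum_add_distrib, ← Finset.smul_sum]
              congr 2
              exact (map_sum (Matrix.mulVecLin u) _ _).symm
          _ = ((c : ℂ) • v - u *ᵥ v) + η • (u *ᵥ ((c : ℂ) • v - u *ᵥ v)) := by rw [hsplit]
          _ = ((c : ℂ) - η) • v' := by
              rcases hη with h | h <;> subst h <;>
                (rw [hv']; rw [mulVec_sub, mulVec_smul, huu]; module)
      refine ih W hWu hWcomm v' hne hWv' c' ?_ hodd'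
      rw [hsum', hc']
    by_cases hp : v + (1 : ℂ) • (u *ᵥ v) = 0
    · have hne : v + (-1 : ℂ) • (u *ᵥ v) ≠ 0 := by
        have h2 : v + (-1 : ℂ) • (u *ᵥ v) = (2 : ℂ) • v - (v + (1 : ℂ) • (u *ᵥ v)) := by module
        rw [h2, hp, sub_zero]
        exact smul_ne_zero two_ne_zero hv
      obtain ⟨t, ht⟩ := hodd
      refine key (-1) (Or.inr rfl) hne (c + 1) (by push_cast; ring) ⟨t, ?_⟩
      push_cast at ht ⊢
      omega
    · obtain ⟨t, ht⟩ := hodd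
      refine key 1 (Or.inl rfl) hp (c - 1) (by push_cast; ring) ⟨t - 1, ?_⟩
      push_cast at ht ⊢
      omega

/-- If all odd power sums of nonzero reals vanish, positives and negatives balance. -/
lemma moment_lemma {ι : Type*} [Fintype ι] [DecidableEq ι] (f : ι → ℝ) (hf0 : ∀ i, f i ≠ 0)
    (hmom : ∀ k : ℕ, ∑ i, f i ^ (2 * k + 1) = 0) :
    (Finset.univ.filter fun i => 0 < f i).card = (Finset.univ.filter fun i => f i < 0).card := by
  classical
  set S : Finset ℝ := Finset.image (fun i => (f i) ^ 2) Finset.univ with hS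
  have hmaps : ∀ i ∈ Finset.univ, (f i) ^ 2 ∈ S :=
    fun i _ => Finset.mem_image_of_mem _ (Finset.mem_univ i)
  -- the per-class signed sums vanish
  have hclass : ∀ q ∈ S, ∑ i ∈ Finset.univ.filter (fun i => (f i) ^ 2 = q), f i = 0 := by
    set r := S.card with hr
    set e : Fin r ≃ {y // y ∈ S} := S.equivFin.symm with he
    set x : Fin r → ℝ := fun t => (e t : ℝ) with hx
    have hxinj : Function.Injective x := by
      intro a b hab
      apply e.injective
      exact Subtype.ext hab
    set w : Fin r → ℝ := fun t => ∑ i ∈ Finset.univ.filter (fun i => (f i) ^ 2 = x t), f i with hw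
    have hA : ∀ k : ℕ, ∑ t, w t * x t ^ k = 0 := by
      intro k
      set F : ℝ → ℝ := fun q => ∑ i ∈ Finset.univ.filter (fun i => (f i) ^ 2 = q), f i * q ^ k with hF
      have h1 : ∀ t, w t * x t ^ k = F (x t) := by
        intro t
        rw [hw, hF, Finset.sum_mul]
      calc ∑ t, w t * x t ^ k = ∑ t, F (x t) := by simp_rw [h1]
        _ = ∑ q : {y // y ∈ S}, F q := Equiv.sum_comp e (fun q => F (q : ℝ))
        _ = ∑ q ∈ S, F q := Finset.sum_coe_sort S F
        _ = ∑ q ∈ S, ∑ i ∈ Finset.univ.filter (fun i => (f i) ^ 2 = q), f i * ((f i) ^ 2) ^ k := by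
            apply Finset.sum_congr rfl
            intro q _
            apply Finset.sum_congr rfl
            intro i hi
            rw [Finset.mem_filter] at hi
            rw [hi.2]
        _ = ∑ i, f i * ((f i) ^ 2) ^ k := Finset.sum_fiberwise_of_maps_to hmaps _
        _ = ∑ i, f i ^ (2 * k + 1) := by apply Finset.sum_congr rfl; intro i _; ring
        _ = 0 := hmom k
    have hwzero : w = 0 := by
      have hmv : w ᵥ* (Matrix.vandermonde x) = 0 := by
        ext k
        have : (w ᵥ* (Matrix.vandermonde x)) k = ∑ t, w t * x t ^ (k : ℕ) := by
          simp [Matrix.vecMul, dotProduct, Matrix.vandermonde]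
        rw [this, hA]
        rfl
      have hdet : (Matrix.vandermonde x).det ≠ 0 := by
        rw [Matrix.det_vandermonde]
        apply Finset.prod_ne_zero_iff.mpr
        intro i _
        apply Finset.prod_ne_zero_iff.mpr
        intro j hj
        rw [Finset.mem_Ioi] at hj
        exact sub_ne_zero_of_ne (fun h => ne_of_lt hj (hxinj h).symm)
      exact Matrix.eq_zero_of_vecMul_eq_zero hdet hmv
    intro q hq
    obtain ⟨t, ht⟩ := e.surjective ⟨q, hq⟩
    have hxq : x t = q := by rw [hx]; exact congrArg Subtype.val ht
    have h0 := congr_fun hwzero t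
    rw [← hxq]
    exact h0
  -- per-class card equality
  have hcards : ∀ q ∈ S,
      (Finset.univ.filter fun i => (f i) ^ 2 = q ∧ 0 < f i).card =
      (Finset.univ.filter fun i => (f i) ^ 2 = q ∧ f i < 0).card := by
    intro q hq
    obtain ⟨i0, -, hi0⟩ := Finset.mem_image.mp hq
    have hqpos : 0 < q := by
      rw [← hi0]
      exact pow_two_pos_of_ne_zero (hf0 i0)
    set s := Finset.univ.filter (fun i => (f i) ^ 2 = q) with hs
    have hsplit2 : s.filter (fun i => 0 < f i) ∪ s.filter (fun i => f i < 0) = s := by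
      rw [← Finset.filter_or]
      apply Finset.filter_true_of_mem
      intro i _
      rcases lt_trichotomy (f i) 0 with h | h | h
      · exact Or.inr h
      · exact absurd h (hf0 i)
      · exact Or.inl h
    have hdisj : Disjoint (s.filter (fun i => 0 < f i)) (s.filter (fun i => f i < 0)) := by
      apply Finset.disjoint_filter_filter'
      intro P hP1 hP2 i hi
      exact absurd (hP2 i hi) (not_lt_of_gt (hP1 i hi))
    have hsum0 : ∑ i ∈ s.filter (fun i => 0 < f i), f i + ∑ i ∈ s.filter (fun i => f i < 0), f i = 0 := by
      rw [← Finset.sum_union hdisj, hsplit2]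
      exact hclass q hq
    have hvalp : ∀ i ∈ s.filter (fun i => 0 < f i), f i = Real.sqrt q := by
      intro i hi
      simp only [hs, Finset.mem_filter, Finset.mem_univ, true_and] at hi
      rw [← hi.1, Real.sqrt_sq hi.2.le]
    have hvaln : ∀ i ∈ s.filter (fun i => f i < 0), f i = -Real.sqrt q := by
      intro i hi
      simp only [hs, Finset.mem_filter, Finset.mem_univ, true_and] at hi
      have : (f i)^2 = (-f i)^2 := by ring
      rw [← hi.1, this, Real.sqrt_sq (by linarith [hi.2])]
      ring
    rw [Finset.sum_congr rfl hvalp, Finset.sum_congr rfl hvaln,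
      Finset.sum_const, Finset.sum_const] at hsum0
    have hsq : Real.sqrt q ≠ 0 := ne_of_gt (Real.sqrt_pos.mpr hqpos)
    have hcq : ((s.filter (fun i => 0 < f i)).card : ℝ) = ((s.filter (fun i => f i < 0)).card : ℝ) := by
      have := hsum0
      rw [nsmul_eq_mul, nsmul_eq_mul] at this
      have h2 : ((s.filter (fun i => 0 < f i)).card - (s.filter (fun i => f i < 0)).card : ℝ) * Real.sqrt q = 0 := by
        ring_nf
        ring_nf at this
        linarith
      rcases mul_eq_zero.mp h2 with h | h
      · linarith [sub_eq_zero.mp h]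
      · exact absurd h hsq
    have hcq' : (s.filter (fun i => 0 < f i)).card = (s.filter (fun i => f i < 0)).card := by
      exact_mod_cast hcq
    have e1 : s.filter (fun i => 0 < f i) = Finset.univ.filter (fun i => (f i) ^ 2 = q ∧ 0 < f i) := by
      rw [hs, Finset.filter_filter]
    have e2 : s.filter (fun i => f i < 0) = Finset.univ.filter (fun i => (f i) ^ 2 = q ∧ f i < 0) := by
      rw [hs, Finset.filter_filter]
    rw [← e1, ← e2]
    exact hcq'
  -- assemble
  have c1 : (Finset.univ.filter fun i => 0 < f i).card =
      ∑ q ∈ S, (Finset.univ.filter fun i => (f i) ^ 2 = q ∧ 0 < f i).card := by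
    rw [Finset.card_eq_sum_card_fiberwise (f := fun i => (f i)^2) (t := S)
      (fun i _ => Finset.mem_image_of_mem _ (Finset.mem_univ i))]
    apply Finset.sum_congr rfl
    intro q _
    congr 1
    rw [Finset.filter_filter]
    apply Finset.filter_congr
    intro i _
    tauto
  have c2 : (Finset.univ.filter fun i => f i < 0).card =
      ∑ q ∈ S, (Finset.univ.filter fun i => (f i) ^ 2 = q ∧ f i < 0).card := by
    rw [Finset.card_eq_sum_card_fiberwise (f := fun i => (f i)^2) (t := S)
      (fun i _ => Finset.mem_image_of_mem _ (Finset.mem_univ i))]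
    apply Finset.sum_congr rfl
    intro q _
    congr 1
    rw [Finset.filter_filter]
    apply Finset.filter_congr
    intro i _
    tauto
  rw [c1, c2]
  exact Finset.sum_congr rfl hcards

lemma trace_pow_herm {N : Type*} [Fintype N] [DecidableEq N] {A : Matrix N N ℂ}
    (hA : A.IsHermitian) (m : ℕ) :
    (A ^ m).trace = ∑ i, (hA.eigenvalues i : ℂ) ^ m := by
  set V : Matrix N N ℂ := (Matrix.IsHermitian.eigenvectorUnitary hA : Matrix N N ℂ) with hVdef
  set D : Matrix N N ℂ := Matrix.diagonal (RCLike.ofReal ∘ hA.eigenvalues) with hDdef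
  have hsp : A = V * D * star V := hA.spectral_theorem
  have hVV : V * star V = 1 := mem_unitaryGroup_iff.mp (Matrix.IsHermitian.eigenvectorUnitary hA).2
  have hVV' : star V * V = 1 := mem_unitaryGroup_iff'.mp (Matrix.IsHermitian.eigenvectorUnitary hA).2
  have hpow : ∀ m : ℕ, A ^ m = V * D ^ m * star V := by
    intro m
    induction m with
    | zero => simpa using hVV.symm
    | succ m ih =>
      rw [pow_succ, ih, hsp, pow_succ]
      calc V * D ^ m * star V * (V * D * star V)
          = V * D ^ m * (star V * V) * D * star V := by noncomm_ring
        _ = V * (D ^ m * D) * star V := by rw [hVV']; noncomm_ring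
  rw [hpow m, Matrix.trace_mul_comm, ← mul_assoc, hVV', one_mul]
  rw [hDdef, Matrix.diagonal_pow, Matrix.trace_diagonal]
  rfl
lemma sum_kron {m p k : Type*} [Fintype m] [Fintype p] [Fintype k]
    (s : Finset k) (M : k → Matrix m m ℂ) (B : Matrix p p ℂ) :
    (∑ j ∈ s, M j) ⊗ₖ B = ∑ j ∈ s, (M j ⊗ₖ B) := by
  ext ⟨i1, i2⟩ ⟨j1, j2⟩
  simp only [Matrix.kroneckerMap_apply, Matrix.sum_apply, Finset.sum_mul]

lemma sum_mulVec' {m k : Type*} [Fintype m] [Fintype k]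
    (s : Finset k) (M : k → Matrix m m ℂ) (w : m → ℂ) :
    (∑ j ∈ s, M j) *ᵥ w = ∑ j ∈ s, (M j *ᵥ w) := by
  induction s using Finset.cons_induction with
  | empty => simp [Matrix.zero_mulVec]
  | cons a s ha ih => rw [Finset.sum_cons, Finset.sum_cons, Matrix.add_mulVec, ih]

lemma dotProduct_sum' {m k : Type*} [Fintype m] [Fintype k]
    (s : Finset k) (x : m → ℂ) (y : k → m → ℂ) :
    x ⬝ᵥ (∑ j ∈ s, y j) = ∑ j ∈ s, x ⬝ᵥ y j := by
  induction s using Finset.cons_induction with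
  | empty => simp
  | cons a s ha ih => rw [Finset.sum_cons, Finset.sum_cons, dotProduct_add, ih]

lemma mRe_herm {n : ℕ} (A : Matrix (Fin n) (Fin n) ℂ) : (mRe A).IsHermitian := by
  unfold Matrix.IsHermitian mRe
  rw [Matrix.conjTranspose_smul, Matrix.conjTranspose_add, Matrix.conjTranspose_conjTranspose]
  rw [show star (1/2 : ℂ) = (1/2 : ℂ) by simp]
  rw [add_comm]

lemma mIm_herm {n : ℕ} (A : Matrix (Fin n) (Fin n) ℂ) : (mIm A).IsHermitian := by
  unfold Matrix.IsHermitian mIm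
  rw [Matrix.conjTranspose_smul, Matrix.conjTranspose_sub, Matrix.conjTranspose_conjTranspose]
  rw [show star (1/(2 * Complex.I) : ℂ) = -(1/(2 * Complex.I)) by
    simp [Complex.ext_iff]]
  rw [neg_smul, ← smul_neg, neg_sub]

/-- for pairwise commuting unitaries `U_1, …, U_d` and a selfadjoint Clifford
family `γ_1, …, γ_{d+1}`, the Hermitian matrix
`G = ∑ Im(U_j) ⊗ γ_j + ((d-1)·1 - ∑ Re(U_j)) ⊗ γ_{d+1}` is invertible and `Sig(G) = 0`. -/
theorem stmt2 {n d' : ℕ} (d : ℕ) (hd : 1 ≤ d)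
    (U : Fin d → Matrix (Fin n) (Fin n) ℂ)
    (hU : ∀ j, U j * (U j)ᴴ = 1 ∧ (U j)ᴴ * U j = 1)
    (hcomm : ∀ i j, U i * U j = U j * U i)
    (γ : Fin (d+1) → Matrix (Fin d') (Fin d') ℂ)
    (hγherm : ∀ k, (γ k).IsHermitian)
    (hγcliff : ∀ k l, γ k * γ l + γ l * γ k = (if k = l then (2:ℂ) else 0) • 1)
    (G : Matrix (Fin n × Fin d') (Fin n × Fin d') ℂ)
    (hG : G = (∑ j : Fin d, mIm (U j) ⊗ₖ γ j.castSucc) +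
      ((((d : ℂ) - 1) • (1 : Matrix (Fin n) (Fin n) ℂ) - ∑ j : Fin d, mRe (U j)) ⊗ₖ
        γ (Fin.last d))) :
    G.IsHermitian ∧ IsUnit G ∧ matSig G = 0 := by
  have hU1 : ∀ j, U j * (U j)ᴴ = 1 := fun j => (hU j).1
  set R : Matrix (Fin n) (Fin n) ℂ := ((d : ℂ) - 1) • 1 - ∑ j : Fin d, mRe (U j) with hR
  set A : Fin (d+1) → Matrix (Fin n) (Fin n) ℂ := Fin.snoc (fun j => mIm (U j)) R with hA
  have hAcs : ∀ j : Fin d, A (Fin.castSucc j) = mIm (U j) := fun j => Fin.snoc_castSucc _ _ _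
  have hAl : A (Fin.last d) = R := Fin.snoc_last _ _
  have hG' : G = ∑ k : Fin (d+1), A k ⊗ₖ γ k := by
    rw [hG, Fin.sum_univ_castSucc]
    simp only [hAcs, hAl]
  -- commutation of building blocks
  have hUH : ∀ i j, (U i)ᴴ * U j = U j * (U i)ᴴ := commH U hU1 hcomm
  have hHH : ∀ i j, (U i)ᴴ * (U j)ᴴ = (U j)ᴴ * (U i)ᴴ := by
    intro i j
    have := congrArg Matrix.conjTranspose (hcomm j i)
    simpa [Matrix.conjTranspose_mul] using this
  have cImIm : ∀ i j, Commute (mIm (U i)) (mIm (U j)) := by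
    intro i j
    unfold mIm
    have c1 : Commute (U i) (U j) := hcomm i j
    have c2 : Commute (U i) ((U j)ᴴ) := (hUH j i).symm
    have c3 : Commute ((U i)ᴴ) (U j) := hUH i j
    have c4 : Commute ((U i)ᴴ) ((U j)ᴴ) := hHH i j
    exact (((c1.sub_right c2).sub_left (c3.sub_right c4)).smul_right _).smul_left _
  have cImRe : ∀ i j, Commute (mIm (U i)) (mRe (U j)) := by
    intro i j
    unfold mIm mRe
    have c1 : Commute (U i) (U j) := hcomm i j
    have c2 : Commute (U i) ((U j)ᴴ) := (hUH j i).symm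
    have c3 : Commute ((U i)ᴴ) (U j) := hUH i j
    have c4 : Commute ((U i)ᴴ) ((U j)ᴴ) := hHH i j
    exact (((c1.add_right c2).sub_left (c3.add_right c4)).smul_right _).smul_left _
  have cReRe : ∀ i j, Commute (mRe (U i)) (mRe (U j)) := by
    intro i j
    unfold mRe
    have c1 : Commute (U i) (U j) := hcomm i j
    have c2 : Commute (U i) ((U j)ᴴ) := (hUH j i).symm
    have c3 : Commute ((U i)ᴴ) (U j) := hUH i j
    have c4 : Commute ((U i)ᴴ) ((U j)ᴴ) := hHH i j
    exact (((c1.add_right c2).add_left (c3.add_right c4)).smul_right _).smul_left _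
  have cImR : ∀ i, Commute (mIm (U i)) R := by
    intro i
    rw [hR]
    exact Commute.sub_right ((Commute.one_right _).smul_right _)
      (Commute.sum_right _ _ _ (fun j _ => cImRe i j))
  have hAcomm : ∀ k l, A k * A l = A l * A k := by
    intro k l
    induction k using Fin.lastCases with
    | last =>
      induction l using Fin.lastCases with
      | last => rfl
      | cast l => rw [hAl, hAcs]; exact (cImR l).symm
    | cast k =>
      induction l using Fin.lastCases with
      | last => rw [hAl, hAcs]; exact (cImR k)
      | cast l => rw [hAcs, hAcs]; exact cImIm k l
  -- Hermitian
  have hRherm : R.IsHermitian := by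
    rw [hR]
    unfold Matrix.IsHermitian
    rw [Matrix.conjTranspose_sub, Matrix.conjTranspose_smul, Matrix.conjTranspose_one,
      Matrix.conjTranspose_sum]
    congr 1
    · congr 1
      simp
    · exact Finset.sum_congr rfl (fun j _ => mRe_herm (U j))
  have hAherm : ∀ k, (A k).IsHermitian := by
    intro k
    induction k using Fin.lastCases with
    | last => rw [hAl]; exact hRherm
    | cast k => rw [hAcs]; exact mIm_herm (U k)
  have hGherm : G.IsHermitian := by
    rw [hG']
    unfold Matrix.IsHermitian
    rw [Matrix.conjTranspose_sum]
    exact Finset.sum_congr rfl (fun k _ => by rw [kron_conjT, hAherm k, hγherm k])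
  -- Clifford consequences
  have hγsq : ∀ k, γ k * γ k = 1 := by
    intro k
    have h := hγcliff k k
    rw [if_pos rfl] at h
    have h2 : (2:ℂ) • (γ k * γ k) = (2:ℂ) • (1 : Matrix (Fin d') (Fin d') ℂ) := by
      rw [two_smul]; exact h
    exact smul_right_injective _ two_ne_zero h2
  have hγanti : ∀ k l, k ≠ l → γ k * γ l = -(γ l * γ k) := by
    intro k l hkl
    have h := hγcliff k l
    rw [if_neg hkl, zero_smul] at h
    exact eq_neg_of_add_eq_zero_left h
  have trγ : ∀ k, (γ k).trace = 0 := by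
    intro k
    obtain ⟨l, hlk⟩ : ∃ l : Fin (d+1), l ≠ k := by
      rcases eq_or_ne k 0 with h | h
      · refine ⟨Fin.last d, ?_⟩
        rw [h]
        intro hc
        have := congrArg Fin.val hc
        simp [Fin.last] at this
        omega
      · exact ⟨0, fun hc => h hc.symm⟩
    have step : (γ k).trace = -((γ k).trace) := by
      calc (γ k).trace = (γ k * (γ l * γ l)).trace := by rw [hγsq, mul_one]
        _ = ((γ k * γ l) * γ l).trace := by rw [mul_assoc]
        _ = (γ l * (γ k * γ l)).trace := by rw [Matrix.trace_mul_comm]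
        _ = ((γ l * γ k) * γ l).trace := by rw [mul_assoc]
        _ = ((-(γ k * γ l)) * γ l).trace := by rw [← hγanti l k hlk]
        _ = -((γ k * (γ l * γ l)).trace) := by rw [neg_mul, Matrix.trace_neg, mul_assoc]
        _ = -((γ k).trace) := by rw [hγsq, mul_one]
    linear_combination step / 2
  -- the square
  set Q : Matrix (Fin n) (Fin n) ℂ := ∑ k : Fin (d+1), A k * A k with hQ
  have hGG : G * G = Q ⊗ₖ (1 : Matrix (Fin d') (Fin d') ℂ) := by
    have expand : G * G = ∑ k : Fin (d+1), ∑ l : Fin (d+1), (A k * A l) ⊗ₖ (γ k * γ l) := by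
      rw [hG', Finset.sum_mul_sum]
      exact Finset.sum_congr rfl (fun k _ => Finset.sum_congr rfl
        (fun l _ => (Matrix.mul_kronecker_mul _ _ _ _).symm))
    have swap : ∑ k : Fin (d+1), ∑ l : Fin (d+1), (A k * A l) ⊗ₖ (γ k * γ l)
        = ∑ k : Fin (d+1), ∑ l : Fin (d+1), (A k * A l) ⊗ₖ (γ l * γ k) := by
      rw [Finset.sum_comm]
      exact Finset.sum_congr rfl (fun k _ => Finset.sum_congr rfl
        (fun l _ => by rw [hAcomm]))
    have h2 : G * G + G * G = (Q ⊗ₖ (1 : Matrix (Fin d') (Fin d') ℂ))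
        + (Q ⊗ₖ (1 : Matrix (Fin d') (Fin d') ℂ)) := by
      nth_rewrite 1 [expand]
      nth_rewrite 1 [expand]
      nth_rewrite 2 [swap]
      rw [← Finset.sum_add_distrib]
      have : ∀ k : Fin (d+1), ((∑ l : Fin (d+1), (A k * A l) ⊗ₖ (γ k * γ l))
          + ∑ l : Fin (d+1), (A k * A l) ⊗ₖ (γ l * γ k))
          = (2:ℂ) • ((A k * A k) ⊗ₖ (1 : Matrix (Fin d') (Fin d') ℂ)) := by
        intro k
        rw [← Finset.sum_add_distrib]
        rw [Finset.sum_eq_single k]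
        · rw [← Matrix.kronecker_add, hγcliff k k, if_pos rfl, Matrix.kronecker_smul]
        · intro l _ hlk
          rw [← Matrix.kronecker_add, hγcliff k l, if_neg (Ne.symm hlk)]
          rw [zero_smul]
          exact Matrix.kroneckerMap_zero_right _ (fun a => mul_zero a) _
        · intro h
          exact absurd (Finset.mem_univ k) h
      rw [Finset.sum_congr rfl (fun k _ => this k)]
      rw [← Finset.smul_sum, ← sum_kron, ← hQ, two_smul]
    have h3 : (2:ℂ) • (G * G) = (2:ℂ) • (Q ⊗ₖ (1 : Matrix (Fin d') (Fin d') ℂ)) := by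
      rw [two_smul, two_smul]; exact h2
    exact smul_right_injective _ two_ne_zero h3
  -- kernel is trivial
  have hker : ∀ v : (Fin n × Fin d') → ℂ, G *ᵥ v = 0 → v = 0 := by
    intro v hv
    by_contra hvne
    obtain ⟨⟨a0, b0⟩, hab⟩ := Function.ne_iff.mp hvne
    set w : Fin n → ℂ := fun a => v (a, b0) with hwdef
    have hwne : w ≠ 0 := by
      intro h
      exact hab (congr_fun h a0)
    have hQv : (Q ⊗ₖ (1 : Matrix (Fin d') (Fin d') ℂ)) *ᵥ v = 0 := by
      rw [← hGG, ← Matrix.mulVec_mulVec, hv, Matrix.mulVec_zero]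
    have hQw : Q *ᵥ w = 0 := by
      ext a
      have hcf := congr_fun hQv (a, b0)
      have key : ((Q ⊗ₖ (1 : Matrix (Fin d') (Fin d') ℂ)) *ᵥ v) (a, b0)
          = ∑ a', Q a a' * v (a', b0) := by
        simp only [Matrix.mulVec, dotProduct, Fintype.sum_prod_type,
          Matrix.kroneckerMap_apply, Matrix.one_apply, mul_ite, mul_one, mul_zero,
          ite_mul, zero_mul]
        rw [Finset.sum_congr rfl (fun a' _ => Finset.sum_ite_eq (Finset.univ) b0
          (fun b' => Q a a' * v (a', b')))]
        simp
      rw [key] at hcf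
      simpa [Matrix.mulVec, dotProduct] using hcf
    have hzero : ∀ k, A k *ᵥ w = 0 := by
      have hdp : ∑ k : Fin (d+1), star (A k *ᵥ w) ⬝ᵥ (A k *ᵥ w) = 0 := by
        have e1 : ∀ k : Fin (d+1), star (A k *ᵥ w) ⬝ᵥ (A k *ᵥ w)
            = star w ⬝ᵥ ((A k * A k) *ᵥ w) := by
          intro k
          rw [Matrix.star_mulVec, hAherm k, Matrix.dotProduct_mulVec,
            Matrix.vecMul_vecMul, ← Matrix.dotProduct_mulVec]
        rw [Finset.sum_congr rfl (fun k _ => e1 k), ← dotProduct_sum']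
        rw [← sum_mulVec', ← hQ, hQw, dotProduct_zero]
      intro k
      have hnn : ∀ k : Fin (d+1), (0:ℂ) ≤ star (A k *ᵥ w) ⬝ᵥ (A k *ᵥ w) :=
        fun k => dotProduct_star_self_nonneg _
      have := (Finset.sum_eq_zero_iff_of_nonneg (fun k _ => hnn k)).mp hdp k (Finset.mem_univ k)
      exact dotProduct_star_self_eq_zero.mp this
    have hUw : ∀ j, U j *ᵥ w = (U j)ᴴ *ᵥ w := by
      intro j
      have h := hzero (Fin.castSucc j)
      rw [hAcs] at h
      unfold mIm at h
      rw [Matrix.smul_mulVec, smul_eq_zero] at h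
      rcases h with h | h
      · exfalso
        rw [div_eq_zero_iff] at h
        rcases h with h | h
        · exact one_ne_zero h
        · simp [Complex.I_ne_zero] at h
      · rw [Matrix.sub_mulVec, sub_eq_zero] at h
        exact h
    have hsumw : (∑ j : Fin d, U j *ᵥ w) = ((d:ℂ) - 1) • w := by
      have h := hzero (Fin.last d)
      rw [hAl, hR, Matrix.sub_mulVec, sub_eq_zero, Matrix.smul_mulVec,
        Matrix.one_mulVec] at h
      rw [sum_mulVec'] at h
      have hre : ∀ j, mRe (U j) *ᵥ w = U j *ᵥ w := by
        intro j
        unfold mRe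
        rw [Matrix.smul_mulVec, Matrix.add_mulVec, ← hUw j, ← two_smul ℂ (U j *ᵥ w),
          smul_smul]
        norm_num
      rw [Finset.sum_congr rfl (fun j _ => hre j)] at h
      exact h.symm
    refine parity_ind d U hU1 hcomm w hwne hUw ((d:ℤ) - 1) ?_ ⟨(d:ℤ) - 1, by ring⟩
    rw [hsumw]
    push_cast
    ring_nf
  -- invertibility
  have hdet : G.det ≠ 0 := by
    intro h
    obtain ⟨v, hv0, hv⟩ := (Matrix.exists_mulVec_eq_zero_iff).mpr h
    exact hv0 (hker v hv)
  have hunit : IsUnit G := (Matrix.isUnit_iff_isUnit_det G).mpr (Ne.isUnit hdet)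
  -- eigenvalues
  set f := hGherm.eigenvalues with hf
  have hf0 : ∀ i, f i ≠ 0 := by
    intro i hfi
    apply hdet
    rw [hGherm.det_eq_prod_eigenvalues]
    exact Finset.prod_eq_zero (Finset.mem_univ i) (by rw [← hf, hfi]; simp)
  have hpowodd : ∀ k : ℕ, G ^ (2*k+1) = ((Q ^ k) ⊗ₖ (1 : Matrix (Fin d') (Fin d') ℂ)) * G := by
    intro k
    induction k with
    | zero => simp [Matrix.one_kronecker_one]
    | succ k ih =>
      have hGQ : G * (Q ⊗ₖ (1 : Matrix (Fin d') (Fin d') ℂ)) =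
          (Q ⊗ₖ (1 : Matrix (Fin d') (Fin d') ℂ)) * G := by
        rw [← hGG, mul_assoc, ← mul_assoc]
      have h1 : 2*(k+1)+1 = (2*k+1) + 2 := by ring
      rw [h1, pow_add, ih, pow_two, hGG, mul_assoc, hGQ, ← mul_assoc,
        ← Matrix.mul_kronecker_mul, ← pow_succ, one_mul]
  have htr : ∀ k : ℕ, (G ^ (2*k+1)).trace = 0 := by
    intro k
    rw [hpowodd k, hG', Finset.mul_sum, Matrix.trace_sum]
    rw [Finset.sum_congr rfl (fun l _ => by
      rw [← Matrix.mul_kronecker_mul, one_mul, Matrix.trace_kronecker, trγ l, mul_zero])]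
    exact Finset.sum_const_zero
  have hmom : ∀ k : ℕ, ∑ i, f i ^ (2*k+1) = 0 := by
    intro k
    have h1 := trace_pow_herm hGherm (2*k+1)
    rw [htr k] at h1
    have h2 : ((∑ i, f i ^ (2*k+1) : ℝ) : ℂ) = 0 := by
      push_cast
      exact h1.symm
    exact_mod_cast h2
  have hcard := moment_lemma f hf0 hmom
  refine ⟨hGherm, hunit, ?_⟩
  unfold matSig
  rw [dif_pos hGherm]
  rw [← hf]
  omega
end
end

section
/- For every d ≥ 1 there exists δ₀ > 0, depending only on d, with the following property: whenever A_1, …, A_d ∈ M_n(ℂ) form a fuzzy d-torus of width δ ≤ δ₀ and γ_1, …, γ_{d+1} ∈ M_{d'}(ℂ) is a selfadjoint Clifford family, the matrix G̃ = ∑_{j=1}^d Im(A_j) ⊗ γ_j + ((d+1)·1 − ∑_{j=1}^d Re(A_j)) ⊗ γ_{d+1} has the property that (1−t)·(1 ⊗ γ_{d+1}) + t·G̃ is invertible for every t ∈ [0,1]; in particular G̃ is connected to 1 ⊗ γ_{d+1} by a continuous path of invertible matrices. -/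
open Matrix
open scoped Kronecker Matrix.Norms.L2Operator ComplexOrder

noncomputable section

set_option linter.unusedSectionVars false

namespace Aux

variable {m p : Type*} [Fintype m] [Fintype p] [DecidableEq m] [DecidableEq p]

/-- Euclidean norm of a plain vector. -/
def enorm (x : m → ℂ) : ℝ := ‖(EuclideanSpace.equiv m ℂ).symm x‖

lemma enorm_nonneg (x : m → ℂ) : 0 ≤ enorm x := norm_nonneg _

lemma enorm_sq (x : m → ℂ) : enorm x ^ 2 = ∑ i, ‖x i‖ ^ 2 := by
  rw [enorm, EuclideanSpace.norm_eq, Real.sq_sqrt (by positivity)]; rfl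

lemma dot_eq_inner (x y : m → ℂ) :
    star x ⬝ᵥ y = @inner ℂ _ _ ((EuclideanSpace.equiv m ℂ).symm x)
      ((EuclideanSpace.equiv m ℂ).symm y) := by
  simp [dotProduct, PiLp.inner_apply, RCLike.inner_apply, mul_comm]

lemma re_dot_self (x : m → ℂ) : (star x ⬝ᵥ x).re = enorm x ^ 2 := by
  rw [dot_eq_inner]
  have := inner_self_eq_norm_sq (𝕜 := ℂ) ((EuclideanSpace.equiv m ℂ).symm x)
  simpa [RCLike.re_to_complex, enorm] using this

lemma enorm_mulVec_le (M : Matrix m p ℂ) (x : p → ℂ) :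
    enorm (M *ᵥ x) ≤ ‖M‖ * enorm x :=
  M.l2_opNorm_mulVec ((EuclideanSpace.equiv p ℂ).symm x)

/-- Cauchy–Schwarz-type bound for the quadratic form of a matrix. -/
lemma qf_abs_le (M : Matrix m m ℂ) (x : m → ℂ) :
    ‖star x ⬝ᵥ M *ᵥ x‖ ≤ ‖M‖ * enorm x ^ 2 := by
  rw [dot_eq_inner]
  calc ‖@inner ℂ _ _ ((EuclideanSpace.equiv m ℂ).symm x) ((EuclideanSpace.equiv m ℂ).symm (M *ᵥ x))‖
      ≤ ‖(EuclideanSpace.equiv m ℂ).symm x‖ * ‖(EuclideanSpace.equiv m ℂ).symm (M *ᵥ x)‖ :=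
        norm_inner_le_norm _ _
    _ ≤ enorm x * (‖M‖ * enorm x) := by
        apply mul_le_mul_of_nonneg_left (M.l2_opNorm_mulVec _) (norm_nonneg _)
    _ = ‖M‖ * enorm x ^ 2 := by ring

lemma qf_abs_le' (M : Matrix m m ℂ) (x : m → ℂ) :
    ‖star x ⬝ᵥ M *ᵥ x‖ ≤ enorm x * enorm (M *ᵥ x) := by
  rw [dot_eq_inner]
  exact norm_inner_le_norm _ _

lemma qf_re_le (M : Matrix m m ℂ) (x : m → ℂ) :
    (star x ⬝ᵥ M *ᵥ x).re ≤ ‖M‖ * enorm x ^ 2 :=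
  le_trans (Complex.re_le_norm _) (qf_abs_le M x)

lemma qf_re_neg_le (M : Matrix m m ℂ) (x : m → ℂ) :
    -(‖M‖ * enorm x ^ 2) ≤ (star x ⬝ᵥ M *ᵥ x).re := by
  have := Complex.abs_re_le_norm (star x ⬝ᵥ M *ᵥ x)
  have h := qf_abs_le M x
  cases abs_cases (star x ⬝ᵥ M *ᵥ x).re with
  | inl hc => nlinarith
  | inr hc => nlinarith

/-- `⟪x, Mᴴ M x⟫ = ‖M x‖²`. -/
lemma qf_conjTranspose_mul_self (M : Matrix m m ℂ) (x : m → ℂ) :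
    (star x ⬝ᵥ (Mᴴ * M) *ᵥ x).re = enorm (M *ᵥ x) ^ 2 := by
  rw [← Matrix.mulVec_mulVec, Matrix.dotProduct_mulVec, ← re_dot_self (M *ᵥ x)]
  congr 1
  rw [← Matrix.star_mulVec]

lemma opNorm_le {c : ℝ} (hc : 0 ≤ c) (M : Matrix m p ℂ)
    (h : ∀ x : p → ℂ, enorm (M *ᵥ x) ≤ c * enorm x) : ‖M‖ ≤ c := by
  rw [Matrix.l2_opNorm_def]
  apply ContinuousLinearMap.opNorm_le_bound _ hc
  intro x
  exact h ((EuclideanSpace.equiv p ℂ) x)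

lemma opNorm_one_le : ‖(1 : Matrix m m ℂ)‖ ≤ 1 := by
  rw [Matrix.l2_opNorm_def]
  apply ContinuousLinearMap.opNorm_le_bound _ zero_le_one
  intro x
  rw [one_mul]
  apply le_of_eq
  congr 1
  show (WithLp.equiv _ _).symm ((1 : Matrix m m ℂ) *ᵥ (WithLp.equiv _ _ x)) = x
  simp

lemma sum_mulVec {ι : Type*} (s : Finset ι) (B : ι → Matrix m m ℂ) (y : m → ℂ) :
    (∑ i ∈ s, B i) *ᵥ y = ∑ i ∈ s, B i *ᵥ y := by
  funext i
  simp [Matrix.mulVec, dotProduct, Matrix.sum_apply, Finset.sum_mul, Finset.sum_apply]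
  rw [Finset.sum_comm]

lemma dotProduct_sum {ι : Type*} (s : Finset ι) (v : m → ℂ) (w : ι → m → ℂ) :
    v ⬝ᵥ (∑ i ∈ s, w i) = ∑ i ∈ s, v ⬝ᵥ w i := by
  simp [dotProduct, Finset.mul_sum, Finset.sum_apply]
  rw [Finset.sum_comm]

lemma rsmul (r : ℝ) (N : Matrix m p ℂ) : r • N = ((r : ℂ)) • N := by
  ext i j; simp [Matrix.smul_apply, Complex.real_smul]

lemma kron_one_mulVec (P : Matrix m m ℂ) (x : m × p → ℂ) (i : m) (k : p) :
    ((P ⊗ₖ (1 : Matrix p p ℂ)) *ᵥ x) (i, k) = (P *ᵥ fun j => x (j, k)) i := by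
  simp [Matrix.mulVec, dotProduct, Fintype.sum_prod_type, Matrix.one_apply,
    ite_mul, mul_ite, Finset.sum_ite_eq', kroneckerMap_apply]

lemma one_kron_mulVec (Q : Matrix p p ℂ) (x : m × p → ℂ) (i : m) (k : p) :
    (((1 : Matrix m m ℂ) ⊗ₖ Q) *ᵥ x) (i, k) = (Q *ᵥ fun l => x (i, l)) k := by
  simp [Matrix.mulVec, dotProduct, Fintype.sum_prod_type, Matrix.one_apply,
    ite_mul, mul_ite, Finset.sum_ite_eq, kroneckerMap_apply]

lemma enorm_prod_right (x : m × p → ℂ) :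
    enorm x ^ 2 = ∑ k : p, enorm (fun j => x (j, k)) ^ 2 := by
  simp only [enorm_sq, Fintype.sum_prod_type]
  rw [Finset.sum_comm]

lemma enorm_prod_left (x : m × p → ℂ) :
    enorm x ^ 2 = ∑ i : m, enorm (fun l => x (i, l)) ^ 2 := by
  simp only [enorm_sq, Fintype.sum_prod_type]

lemma opNorm_kron_one_le (P : Matrix m m ℂ) :
    ‖P ⊗ₖ (1 : Matrix p p ℂ)‖ ≤ ‖P‖ := by
  apply opNorm_le (norm_nonneg _)
  intro x
  have h1 : enorm ((P ⊗ₖ (1 : Matrix p p ℂ)) *ᵥ x) ^ 2 ≤ (‖P‖ * enorm x) ^ 2 := by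
    rw [enorm_prod_right]
    have : ∀ k : p, enorm (fun j => ((P ⊗ₖ (1 : Matrix p p ℂ)) *ᵥ x) (j, k)) ^ 2
        ≤ ‖P‖ ^ 2 * enorm (fun j => x (j, k)) ^ 2 := by
      intro k
      have h := enorm_mulVec_le P (fun j => x (j, k))
      have h2 : enorm (fun j => ((P ⊗ₖ (1 : Matrix p p ℂ)) *ᵥ x) (j, k))
          = enorm (P *ᵥ fun j => x (j, k)) := by
        congr 1; funext j; exact kron_one_mulVec P x j k
      rw [h2]
      nlinarith [enorm_nonneg (P *ᵥ fun j => x (j,k)), enorm_nonneg (fun j => x (j,k)), norm_nonneg P]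
    calc ∑ k : p, enorm (fun j => ((P ⊗ₖ (1:Matrix p p ℂ)) *ᵥ x) (j, k)) ^ 2
        ≤ ∑ k : p, ‖P‖ ^ 2 * enorm (fun j => x (j, k)) ^ 2 := Finset.sum_le_sum fun k _ => this k
      _ = (‖P‖ * enorm x) ^ 2 := by rw [← Finset.mul_sum, ← enorm_prod_right]; ring
  have hnn : 0 ≤ ‖P‖ * enorm x := mul_nonneg (norm_nonneg _) (enorm_nonneg _)
  nlinarith [enorm_nonneg ((P ⊗ₖ (1 : Matrix p p ℂ)) *ᵥ x)]

lemma opNorm_one_kron_le (Q : Matrix p p ℂ) :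
    ‖(1 : Matrix m m ℂ) ⊗ₖ Q‖ ≤ ‖Q‖ := by
  apply opNorm_le (norm_nonneg _)
  intro x
  have h1 : enorm (((1 : Matrix m m ℂ) ⊗ₖ Q) *ᵥ x) ^ 2 ≤ (‖Q‖ * enorm x) ^ 2 := by
    rw [enorm_prod_left]
    have : ∀ i : m, enorm (fun l => (((1 : Matrix m m ℂ) ⊗ₖ Q) *ᵥ x) (i, l)) ^ 2
        ≤ ‖Q‖ ^ 2 * enorm (fun l => x (i, l)) ^ 2 := by
      intro i
      have h := enorm_mulVec_le Q (fun l => x (i, l))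
      have h2 : enorm (fun l => (((1 : Matrix m m ℂ) ⊗ₖ Q) *ᵥ x) (i, l))
          = enorm (Q *ᵥ fun l => x (i, l)) := by
        congr 1; funext l; exact one_kron_mulVec Q x i l
      rw [h2]
      nlinarith [enorm_nonneg (Q *ᵥ fun l => x (i,l)), enorm_nonneg (fun l => x (i,l)), norm_nonneg Q]
    calc ∑ i : m, enorm (fun l => (((1:Matrix m m ℂ) ⊗ₖ Q) *ᵥ x) (i, l)) ^ 2
        ≤ ∑ i : m, ‖Q‖ ^ 2 * enorm (fun l => x (i, l)) ^ 2 := Finset.sum_le_sum fun i _ => this i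
      _ = (‖Q‖ * enorm x) ^ 2 := by rw [← Finset.mul_sum, ← enorm_prod_left]; ring
  have hnn : 0 ≤ ‖Q‖ * enorm x := mul_nonneg (norm_nonneg _) (enorm_nonneg _)
  nlinarith [enorm_nonneg (((1 : Matrix m m ℂ) ⊗ₖ Q) *ᵥ x)]

lemma opNorm_kron_le (P : Matrix m m ℂ) (Q : Matrix p p ℂ) :
    ‖P ⊗ₖ Q‖ ≤ ‖P‖ * ‖Q‖ := by
  have : P ⊗ₖ Q = (P ⊗ₖ (1 : Matrix p p ℂ)) * ((1 : Matrix m m ℂ) ⊗ₖ Q) := by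
    rw [← Matrix.mul_kronecker_mul, Matrix.mul_one, Matrix.one_mul]
  rw [this]
  calc ‖(P ⊗ₖ (1 : Matrix p p ℂ)) * ((1 : Matrix m m ℂ) ⊗ₖ Q)‖
      ≤ ‖P ⊗ₖ (1 : Matrix p p ℂ)‖ * ‖(1 : Matrix m m ℂ) ⊗ₖ Q‖ := Matrix.l2_opNorm_mul _ _
    _ ≤ ‖P‖ * ‖Q‖ := mul_le_mul (opNorm_kron_one_le P) (opNorm_one_kron_le Q)
        (norm_nonneg _) (norm_nonneg _)

lemma qf_kron_one (P : Matrix m m ℂ) (x : m × p → ℂ) :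
    star x ⬝ᵥ (P ⊗ₖ (1 : Matrix p p ℂ)) *ᵥ x
      = ∑ k : p, star (fun j => x (j, k)) ⬝ᵥ P *ᵥ (fun j => x (j, k)) := by
  rw [dotProduct, Fintype.sum_prod_type]
  rw [Finset.sum_comm]
  apply Finset.sum_congr rfl
  intro k _
  apply Finset.sum_congr rfl
  intro j _
  rw [kron_one_mulVec]
  rfl

lemma sum_kronecker {ι : Type*} (s : Finset ι) (f : ι → Matrix m m ℂ) (B : Matrix p p ℂ) :
    (∑ i ∈ s, f i) ⊗ₖ B = ∑ i ∈ s, f i ⊗ₖ B := by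
  ext ⟨i, k⟩ ⟨j, l⟩
  simp [kroneckerMap_apply, Matrix.sum_apply, Finset.sum_mul]

lemma sub_kronecker (A B : Matrix m m ℂ) (C : Matrix p p ℂ) :
    (A - B) ⊗ₖ C = A ⊗ₖ C - B ⊗ₖ C := by
  ext ⟨i, k⟩ ⟨j, l⟩
  simp [kroneckerMap_apply, sub_mul]

lemma conjTranspose_kron (A : Matrix m m ℂ) (B : Matrix p p ℂ) :
    (A ⊗ₖ B)ᴴ = Aᴴ ⊗ₖ Bᴴ := by
  ext ⟨i, k⟩ ⟨j, l⟩
  simp [kroneckerMap_apply, conjTranspose_apply, mul_comm]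

lemma sq_expand {md : ℕ} (X : Fin md → Matrix m m ℂ) (γ : Fin md → Matrix p p ℂ)
    (hcliff : ∀ k l, γ k * γ l + γ l * γ k = (if k = l then (2:ℂ) else 0) • 1) :
    (∑ i, X i ⊗ₖ γ i) * (∑ i, X i ⊗ₖ γ i)
      = (∑ i, X i * X i) ⊗ₖ (1 : Matrix p p ℂ)
        + (2⁻¹ : ℂ) • ∑ i, ∑ j, (X j * X i - X i * X j) ⊗ₖ (γ j * γ i) := by
  have expand : (∑ i, X i ⊗ₖ γ i) * (∑ i, X i ⊗ₖ γ i)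
      = ∑ i, ∑ j, (X i * X j) ⊗ₖ (γ i * γ j) := by
    rw [Finset.sum_mul_sum]
    exact Finset.sum_congr rfl fun i _ => Finset.sum_congr rfl fun j _ =>
      (Matrix.mul_kronecker_mul _ _ _ _).symm
  apply smul_right_injective (Matrix (m × p) (m × p) ℂ) (two_ne_zero (α := ℂ))
  show (2:ℂ) • _ = (2:ℂ) • _
  rw [smul_add, smul_smul, mul_inv_cancel₀ (two_ne_zero (α := ℂ)), one_smul]
  have two_smul' : (2:ℂ) • ((∑ i, X i ⊗ₖ γ i) * (∑ i, X i ⊗ₖ γ i))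
      = ∑ i, ∑ j, (X i * X j) ⊗ₖ (γ i * γ j) + ∑ i, ∑ j, (X j * X i) ⊗ₖ (γ j * γ i) := by
    rw [two_smul, expand]
    congr 1
    rw [Finset.sum_comm]
  rw [two_smul', ← Finset.sum_add_distrib]
  have step : ∀ i : Fin md,
      (∑ j, (X i * X j) ⊗ₖ (γ i * γ j) + ∑ j, (X j * X i) ⊗ₖ (γ j * γ i))
        = (2:ℂ) • ((X i * X i) ⊗ₖ (1 : Matrix p p ℂ))
          + ∑ j, (X j * X i - X i * X j) ⊗ₖ (γ j * γ i) := by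
    intro i
    rw [← Finset.sum_add_distrib]
    have ptwise : ∀ j : Fin md,
        (X i * X j) ⊗ₖ (γ i * γ j) + (X j * X i) ⊗ₖ (γ j * γ i)
          = (if i = j then (2:ℂ) else 0) • ((X i * X j) ⊗ₖ (1 : Matrix p p ℂ))
            + (X j * X i - X i * X j) ⊗ₖ (γ j * γ i) := by
      intro j
      have h1 : (X i * X j) ⊗ₖ (γ i * γ j) + (X j * X i) ⊗ₖ (γ j * γ i)
          = (X i * X j) ⊗ₖ (γ i * γ j + γ j * γ i)
            + (X j * X i - X i * X j) ⊗ₖ (γ j * γ i) := by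
        rw [Matrix.kronecker_add, sub_kronecker]
        abel
      rw [h1, hcliff i j, Matrix.kronecker_smul]
    rw [Finset.sum_congr rfl fun j _ => ptwise j, Finset.sum_add_distrib]
    congr 1
    simp [ite_smul, Finset.sum_ite_eq]
  rw [Finset.sum_congr rfl fun i _ => step i, Finset.sum_add_distrib, ← Finset.smul_sum,
    ← sum_kronecker]

lemma comm_mixed_bound (A B : Matrix m m ℂ) {δ : ℝ}
    (hA : ‖A‖ ≤ 2) (hB : ‖B‖ ≤ 2)
    (hBB : ‖Bᴴ * B - 1‖ ≤ δ) (hBB' : ‖B * Bᴴ - 1‖ ≤ δ)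
    (hc : ‖A * B - B * A‖ ≤ δ) :
    ‖A * Bᴴ - Bᴴ * A‖ ≤ 12 * δ := by
  have hδ : 0 ≤ δ := le_trans (norm_nonneg _) hc
  have hBH : ‖Bᴴ‖ ≤ 2 := by rw [Matrix.l2_opNorm_conjTranspose]; exact hB
  have key : A * Bᴴ - Bᴴ * A
      = (1 - Bᴴ * B) * (A * Bᴴ) + Bᴴ * (B * A - A * B) * Bᴴ + (Bᴴ * A) * (B * Bᴴ - 1) := by
    noncomm_ring
  rw [key]
  have h1 : ‖(1 - Bᴴ * B) * (A * Bᴴ)‖ ≤ δ * (2 * 2) := by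
    calc ‖(1 - Bᴴ * B) * (A * Bᴴ)‖ ≤ ‖1 - Bᴴ * B‖ * ‖A * Bᴴ‖ := Matrix.l2_opNorm_mul _ _
      _ ≤ δ * (2 * 2) := by
          apply mul_le_mul _ _ (norm_nonneg _) hδ
          · rw [norm_sub_rev]; exact hBB
          · calc ‖A * Bᴴ‖ ≤ ‖A‖ * ‖Bᴴ‖ := Matrix.l2_opNorm_mul _ _
              _ ≤ 2 * 2 := mul_le_mul hA hBH (norm_nonneg _) (by norm_num)
  have h2 : ‖Bᴴ * (B * A - A * B) * Bᴴ‖ ≤ 2 * δ * 2 := by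
    calc ‖Bᴴ * (B * A - A * B) * Bᴴ‖ ≤ ‖Bᴴ * (B * A - A * B)‖ * ‖Bᴴ‖ := Matrix.l2_opNorm_mul _ _
      _ ≤ (2 * δ) * 2 := by
          apply mul_le_mul _ hBH (norm_nonneg _) (by positivity)
          calc ‖Bᴴ * (B * A - A * B)‖ ≤ ‖Bᴴ‖ * ‖B * A - A * B‖ := Matrix.l2_opNorm_mul _ _
            _ ≤ 2 * δ := mul_le_mul hBH (by rw [norm_sub_rev]; exact hc) (norm_nonneg _) (by norm_num)
  have h3 : ‖(Bᴴ * A) * (B * Bᴴ - 1)‖ ≤ 2 * 2 * δ := by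
    calc ‖(Bᴴ * A) * (B * Bᴴ - 1)‖ ≤ ‖Bᴴ * A‖ * ‖B * Bᴴ - 1‖ := Matrix.l2_opNorm_mul _ _
      _ ≤ 2 * 2 * δ := by
          apply mul_le_mul _ hBB' (norm_nonneg _) (by norm_num)
          calc ‖Bᴴ * A‖ ≤ ‖Bᴴ‖ * ‖A‖ := Matrix.l2_opNorm_mul _ _
            _ ≤ 2 * 2 := mul_le_mul hBH hA (norm_nonneg _) (by norm_num)
  calc ‖(1 - Bᴴ * B) * (A * Bᴴ) + Bᴴ * (B * A - A * B) * Bᴴ + (Bᴴ * A) * (B * Bᴴ - 1)‖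
      ≤ ‖(1 - Bᴴ * B) * (A * Bᴴ) + Bᴴ * (B * A - A * B) * Bᴴ‖ + ‖(Bᴴ * A) * (B * Bᴴ - 1)‖ :=
        norm_add_le _ _
    _ ≤ (‖(1 - Bᴴ * B) * (A * Bᴴ)‖ + ‖Bᴴ * (B * A - A * B) * Bᴴ‖) + ‖(Bᴴ * A) * (B * Bᴴ - 1)‖ := by
        gcongr; exact norm_add_le _ _
    _ ≤ (δ * (2 * 2) + 2 * δ * 2) + 2 * 2 * δ := by gcongr
    _ = 12 * δ := by ring

lemma comm_lin_bound (A B : Matrix m m ℂ) (a b c e : ℂ) {δ : ℝ}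
    (ha : ‖a‖ ≤ 1/2) (hb : ‖b‖ ≤ 1/2) (hc : ‖c‖ ≤ 1/2) (he : ‖e‖ ≤ 1/2)
    (hAB : ‖A * B - B * A‖ ≤ δ)
    (h1 : ‖A * Bᴴ - Bᴴ * A‖ ≤ 12 * δ)
    (h2 : ‖Aᴴ * B - B * Aᴴ‖ ≤ 12 * δ)
    (h3 : ‖Aᴴ * Bᴴ - Bᴴ * Aᴴ‖ ≤ δ) :
    ‖(a • A + b • Aᴴ) * (c • B + e • Bᴴ) - (c • B + e • Bᴴ) * (a • A + b • Aᴴ)‖ ≤ 7 * δ := by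
  have hδ : 0 ≤ δ := le_trans (norm_nonneg _) hAB
  have key : (a • A + b • Aᴴ) * (c • B + e • Bᴴ) - (c • B + e • Bᴴ) * (a • A + b • Aᴴ)
      = (a * c) • (A * B - B * A) + (a * e) • (A * Bᴴ - Bᴴ * A)
        + (b * c) • (Aᴴ * B - B * Aᴴ) + (b * e) • (Aᴴ * Bᴴ - Bᴴ * Aᴴ) := by
    simp only [add_mul, mul_add, smul_mul_assoc, mul_smul_comm, smul_smul, smul_sub]
    module
  rw [key]
  have n1 : ‖(a * c) • (A * B - B * A)‖ ≤ (1/4) * δ := by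
    rw [norm_smul]
    calc ‖a * c‖ * ‖A * B - B * A‖ ≤ (1/2 * (1/2)) * δ := by
          apply mul_le_mul _ hAB (norm_nonneg _) (by norm_num)
          calc ‖a * c‖ ≤ ‖a‖ * ‖c‖ := norm_mul_le _ _
            _ ≤ 1/2 * (1/2) := mul_le_mul ha hc (norm_nonneg _) (by norm_num)
      _ = (1/4) * δ := by ring
  have n2 : ‖(a * e) • (A * Bᴴ - Bᴴ * A)‖ ≤ (1/4) * (12 * δ) := by
    rw [norm_smul]
    apply mul_le_mul _ h1 (norm_nonneg _) (by norm_num)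
    calc ‖a * e‖ ≤ ‖a‖ * ‖e‖ := norm_mul_le _ _
      _ ≤ 1/4 := by nlinarith [norm_nonneg a, norm_nonneg e]
  have n3 : ‖(b * c) • (Aᴴ * B - B * Aᴴ)‖ ≤ (1/4) * (12 * δ) := by
    rw [norm_smul]
    apply mul_le_mul _ h2 (norm_nonneg _) (by norm_num)
    calc ‖b * c‖ ≤ ‖b‖ * ‖c‖ := norm_mul_le _ _
      _ ≤ 1/4 := by nlinarith [norm_nonneg b, norm_nonneg c]
  have n4 : ‖(b * e) • (Aᴴ * Bᴴ - Bᴴ * Aᴴ)‖ ≤ (1/4) * δ := by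
    rw [norm_smul]
    have hbe : ‖b * e‖ ≤ 1/4 := by
      calc ‖b * e‖ ≤ ‖b‖ * ‖e‖ := norm_mul_le _ _
        _ ≤ 1/4 := by nlinarith [norm_nonneg b, norm_nonneg e]
    exact mul_le_mul hbe h3 (norm_nonneg _) (by norm_num)
  have t1 := norm_add_le ((a * c) • (A * B - B * A)) ((a * e) • (A * Bᴴ - Bᴴ * A))
  have t2 := norm_add_le ((a * c) • (A * B - B * A) + (a * e) • (A * Bᴴ - Bᴴ * A))
    ((b * c) • (Aᴴ * B - B * Aᴴ))
  have t3 := norm_add_le ((a * c) • (A * B - B * A) + (a * e) • (A * Bᴴ - Bᴴ * A)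
    + (b * c) • (Aᴴ * B - B * Aᴴ)) ((b * e) • (Aᴴ * Bᴴ - Bᴴ * Aᴴ))
  linarith

lemma mRe_herm {n : ℕ} (A : Matrix (Fin n) (Fin n) ℂ) : (mRe A)ᴴ = mRe A := by
  rw [mRe, conjTranspose_smul, conjTranspose_add, conjTranspose_conjTranspose]
  have h : star (1/2 : ℂ) = 1/2 := by norm_num
  rw [h, add_comm]

lemma mIm_herm {n : ℕ} (A : Matrix (Fin n) (Fin n) ℂ) : (mIm A)ᴴ = mIm A := by
  rw [mIm, conjTranspose_smul, conjTranspose_sub, conjTranspose_conjTranspose]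
  have h : star (1/(2*Complex.I) : ℂ) = -(1/(2*Complex.I)) := by
    have h2 : (1/(2*Complex.I) : ℂ) = -(2⁻¹) * Complex.I := by
      rw [one_div, mul_inv, Complex.inv_I]; ring
    rw [h2]
    simp [Complex.star_def, _root_.map_mul, map_neg, map_inv₀, Complex.conj_I, Complex.conj_ofNat]
  rw [h, neg_smul, smul_sub, smul_sub, neg_sub]

lemma eq_zero_of_enorm_sq_le_zero (x : m → ℂ) (h : enorm x ^ 2 ≤ 0) : x = 0 := by
  have h4 : ∑ i, ‖x i‖ ^ 2 ≤ 0 := by rw [← enorm_sq]; exact h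
  have h5 : ∀ i ∈ Finset.univ, (0:ℝ) ≤ ‖x i‖ ^ 2 := fun i _ => sq_nonneg _
  have h6 : ∑ i, ‖x i‖ ^ 2 = 0 := le_antisymm h4 (Finset.sum_nonneg h5)
  funext i
  have h7 := (Finset.sum_eq_zero_iff_of_nonneg h5).mp h6 i (Finset.mem_univ i)
  have h8 : ‖x i‖ = 0 := by nlinarith [norm_nonneg (x i)]
  simpa using norm_eq_zero.mp h8

end Aux

set_option maxHeartbeats 2000000 in
/-- for every `d ≥ 1` there is a `δ₀ > 0` depending only on `d` such that for
any fuzzy `d`-torus `A_1, …, A_d` of width `δ ≤ δ₀` and any selfadjoint Clifford family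
`γ_1, …, γ_{d+1}`, the straight-line path from `1 ⊗ γ_{d+1}` to
`G̃ = ∑ Im(A_j) ⊗ γ_j + ((d+1)·1 - ∑ Re(A_j)) ⊗ γ_{d+1}` consists of invertible matrices;
in particular `G̃` is joined to `1 ⊗ γ_{d+1}` within the invertible matrices. -/
theorem stmt5 (d : ℕ) (hd : 1 ≤ d) :
    ∃ δ₀ : ℝ, 0 < δ₀ ∧
      ∀ (n d' : ℕ) (A : Fin d → Matrix (Fin n) (Fin n) ℂ) (δ : ℝ), δ ≤ δ₀ →
        (∀ j, IsUnit (A j)) →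
        (∀ j, ‖A j * (A j)ᴴ - 1‖ ≤ δ) →
        (∀ j, ‖(A j)ᴴ * A j - 1‖ ≤ δ) →
        (∀ i j, ‖A j * A i - A i * A j‖ ≤ δ) →
        ∀ γ : Fin (d+1) → Matrix (Fin d') (Fin d') ℂ,
          (∀ k, (γ k).IsHermitian) →
          (∀ k l, γ k * γ l + γ l * γ k = (if k = l then (2:ℂ) else 0) • 1) →
          ∀ Gt : Matrix (Fin n × Fin d') (Fin n × Fin d') ℂ,
            Gt = (∑ j : Fin d, mIm (A j) ⊗ₖ γ j.castSucc) +
              ((((d : ℂ) + 1) • (1 : Matrix (Fin n) (Fin n) ℂ) - ∑ j : Fin d, mRe (A j)) ⊗ₖ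
                γ (Fin.last d)) →
            (∀ t : ℝ, t ∈ Set.Icc (0:ℝ) 1 →
              IsUnit ((1 - t) • ((1 : Matrix (Fin n) (Fin n) ℂ) ⊗ₖ γ (Fin.last d)) + t • Gt)) ∧
            JoinedIn {M : Matrix (Fin n × Fin d') (Fin n × Fin d') ℂ | IsUnit M}
              ((1 : Matrix (Fin n) (Fin n) ℂ) ⊗ₖ γ (Fin.last d)) Gt := by
  refine ⟨((400:ℝ) * ((d:ℝ)+1)^4)⁻¹, by positivity, ?_⟩
  intro n d' A δ hδ₀ hunit hA1 hA2 hcomm γ hherm hcliff Gt hGt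
  have hδnn : 0 ≤ δ := le_trans (norm_nonneg _) (hA1 ⟨0, hd⟩)
  have hD1 : (1:ℝ) ≤ (d:ℝ) := by exact_mod_cast hd
  -- numeric facts
  have hpos : (0:ℝ) < 400 * ((d:ℝ)+1)^4 := by positivity
  have hbase : 400 * ((d:ℝ)+1)^4 * δ ≤ 1 := by
    calc 400 * ((d:ℝ)+1)^4 * δ ≤ 400 * ((d:ℝ)+1)^4 * (400 * ((d:ℝ)+1)^4)⁻¹ :=
          mul_le_mul_of_nonneg_left hδ₀ (le_of_lt hpos)
      _ = 1 := mul_inv_cancel₀ (ne_of_gt hpos)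
  have hu : (1:ℝ) ≤ (d:ℝ)+1 := by linarith
  have hDd : (d:ℝ) ≤ ((d:ℝ)+1)^4 :=
    le_trans (by linarith) (le_self_pow₀ hu (by norm_num))
  have ha1 : (d:ℝ) * δ ≤ 1/400 := by nlinarith [mul_le_mul_of_nonneg_right hDd hδnn]
  have hDd2 : ((d:ℝ)+1)^2 * (d:ℝ) ≤ ((d:ℝ)+1)^4 := by
    calc ((d:ℝ)+1)^2 * (d:ℝ) ≤ ((d:ℝ)+1)^2 * (((d:ℝ)+1)^2) := by
          apply mul_le_mul_of_nonneg_left _ (sq_nonneg _)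
          nlinarith
      _ = ((d:ℝ)+1)^4 := by ring
  have ha2 : ((d:ℝ)+1)^2 * ((d:ℝ) * δ) ≤ 1/400 := by
    have := mul_le_mul_of_nonneg_right hDd2 hδnn
    nlinarith
  have hδ1 : δ ≤ 1 := by
    have : δ ≤ (d:ℝ) * δ := le_mul_of_one_le_left hδnn hD1
    linarith
  -- norm bounds
  have hone : ‖(1 : Matrix (Fin n) (Fin n) ℂ)‖ ≤ 1 := Aux.opNorm_one_le
  have hAle : ∀ j, ‖A j‖ ≤ 1 + δ := by
    intro j
    have h1 : ‖(A j)ᴴ * A j‖ ≤ δ + 1 := by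
      have h' := norm_add_le ((A j)ᴴ * A j - 1) (1 : Matrix (Fin n) (Fin n) ℂ)
      rw [sub_add_cancel] at h'
      exact le_trans h' (add_le_add (hA2 j) hone)
    have h2 : ‖A j‖ * ‖A j‖ ≤ δ + 1 := by
      rw [← Matrix.l2_opNorm_conjTranspose_mul_self]; exact h1
    nlinarith [norm_nonneg (A j)]
  have hA2n : ∀ j, ‖A j‖ ≤ 2 := fun j => le_trans (hAle j) (by linarith)
  have hγ1 : ∀ k, ‖γ k‖ ≤ 1 := by
    intro k
    have hsqγ : γ k * γ k = 1 := by
      have h := hcliff k k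
      rw [if_pos rfl] at h
      apply smul_right_injective (Matrix (Fin d') (Fin d') ℂ) (two_ne_zero (α := ℂ))
      show (2:ℂ) • _ = (2:ℂ) • _
      rw [two_smul, h]
    have h2 : ‖γ k‖ * ‖γ k‖ ≤ 1 := by
      rw [← Matrix.l2_opNorm_conjTranspose_mul_self, (hherm k).eq, hsqγ]
      exact Aux.opNorm_one_le
    nlinarith [norm_nonneg (γ k)]
  -- commutator bounds
  have hcomm' : ∀ p q : Fin d, ‖A p * A q - A q * A p‖ ≤ δ := fun p q => hcomm q p
  have hmix : ∀ p q : Fin d, ‖A p * (A q)ᴴ - (A q)ᴴ * A p‖ ≤ 12 * δ := fun p q =>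
    Aux.comm_mixed_bound (A p) (A q) (hA2n p) (hA2n q) (hA2 q) (hA1 q) (hcomm' p q)
  have hstar : ∀ p q : Fin d, ‖(A p)ᴴ * (A q)ᴴ - (A q)ᴴ * (A p)ᴴ‖ ≤ δ := by
    intro p q
    have h : (A p)ᴴ * (A q)ᴴ - (A q)ᴴ * (A p)ᴴ = (A q * A p - A p * A q)ᴴ := by
      rw [conjTranspose_sub, conjTranspose_mul, conjTranspose_mul]
    rw [h, Matrix.l2_opNorm_conjTranspose]
    exact hcomm' q p
  have h12n : ‖(1/2 : ℂ)‖ ≤ 1/2 := by norm_num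
  have hI2n : ‖(1/(2*Complex.I) : ℂ)‖ ≤ 1/2 := by
    rw [norm_div, norm_mul, Complex.norm_I]; simp
  have hI2n' : ‖(-(1/(2*Complex.I)) : ℂ)‖ ≤ 1/2 := by rw [norm_neg]; exact hI2n
  have hReForm : ∀ r : Fin d, mRe (A r) = (1/2:ℂ) • A r + (1/2:ℂ) • (A r)ᴴ := by
    intro r; rw [mRe, smul_add]
  have hImForm : ∀ r : Fin d,
      mIm (A r) = (1/(2*Complex.I):ℂ) • A r + (-(1/(2*Complex.I)):ℂ) • (A r)ᴴ := by
    intro r; rw [mIm, smul_sub, neg_smul, sub_eq_add_neg]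
  have hcomm7 : ∀ (p q : Fin d) (P Q : Matrix (Fin n) (Fin n) ℂ),
      (P = mRe (A p) ∨ P = mIm (A p)) → (Q = mRe (A q) ∨ Q = mIm (A q)) →
      ‖P * Q - Q * P‖ ≤ 7 * δ := by
    intro p q P Q hP hQ
    have base : ∀ (a b c e : ℂ), ‖a‖ ≤ 1/2 → ‖b‖ ≤ 1/2 → ‖c‖ ≤ 1/2 → ‖e‖ ≤ 1/2 →
        ‖(a • A p + b • (A p)ᴴ) * (c • A q + e • (A q)ᴴ)
          - (c • A q + e • (A q)ᴴ) * (a • A p + b • (A p)ᴴ)‖ ≤ 7 * δ := by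
      intro a b c e ha hb hc he
      refine Aux.comm_lin_bound (A p) (A q) a b c e ha hb hc he (hcomm' p q) (hmix p q) ?_
        (hstar p q)
      rw [norm_sub_rev]; exact hmix q p
    rcases hP with hP | hP <;> rcases hQ with hQ | hQ
    · rw [hP, hQ, hReForm, hReForm]; exact base _ _ _ _ h12n h12n h12n h12n
    · rw [hP, hQ, hReForm, hImForm]; exact base _ _ _ _ h12n h12n hI2n hI2n'
    · rw [hP, hQ, hImForm, hReForm]; exact base _ _ _ _ hI2n hI2n' h12n h12n
    · rw [hP, hQ, hImForm, hImForm]; exact base _ _ _ _ hI2n hI2n' hI2n hI2n'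
  set C : Matrix (Fin n) (Fin n) ℂ := ((d:ℂ)+1) • 1 - ∑ j : Fin d, mRe (A j) with hC
  have hCcomm : ∀ p : Fin d, ‖C * mIm (A p) - mIm (A p) * C‖ ≤ 7 * (d:ℝ) * δ := by
    intro p
    have hsplit : C * mIm (A p) - mIm (A p) * C
        = ∑ j : Fin d, (mIm (A p) * mRe (A j) - mRe (A j) * mIm (A p)) := by
      rw [hC, sub_mul, mul_sub, smul_mul_assoc, one_mul, mul_smul_comm, mul_one,
        Finset.sum_mul, Finset.mul_sum, Finset.sum_sub_distrib]
      abel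
    rw [hsplit]
    calc ‖∑ j : Fin d, (mIm (A p) * mRe (A j) - mRe (A j) * mIm (A p))‖
        ≤ ∑ j : Fin d, ‖mIm (A p) * mRe (A j) - mRe (A j) * mIm (A p)‖ := norm_sum_le _ _
      _ ≤ ∑ _j : Fin d, 7 * δ := Finset.sum_le_sum fun j _ =>
          hcomm7 p j _ _ (Or.inr rfl) (Or.inl rfl)
      _ = 7 * (d:ℝ) * δ := by
          rw [Finset.sum_const, Finset.card_univ, Fintype.card_fin, nsmul_eq_mul]; ring
  have hCherm : Cᴴ = C := by
    rw [hC, conjTranspose_sub, conjTranspose_smul, conjTranspose_one, conjTranspose_sum]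
    have h1 : star ((d:ℂ)+1) = (d:ℂ)+1 := by simp
    rw [h1]
    congr 1
    exact Finset.sum_congr rfl fun j _ => Aux.mRe_herm (A j)
  -- main invertibility statement
  have main : ∀ t : ℝ, t ∈ Set.Icc (0:ℝ) 1 →
      IsUnit ((1 - t) • ((1 : Matrix (Fin n) (Fin n) ℂ) ⊗ₖ γ (Fin.last d)) + t • Gt) := by
    intro t ht
    obtain ⟨ht0, ht1⟩ := ht
    have htc : ‖(t:ℂ)‖ ≤ 1 := by
      rw [Complex.norm_real, Real.norm_eq_abs, abs_of_nonneg ht0]; exact ht1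
    set X : Fin (d+1) → Matrix (Fin n) (Fin n) ℂ :=
      fun i => Fin.lastCases ((1 - (t:ℂ)) • 1 + (t:ℂ) • C) (fun j => (t:ℂ) • mIm (A j)) i
      with hXdef
    have hXcast : ∀ j : Fin d, X j.castSucc = (t:ℂ) • mIm (A j) := by
      intro j; simp [hXdef]
    have hXlast : X (Fin.last d) = (1 - (t:ℂ)) • 1 + (t:ℂ) • C := by simp [hXdef]
    have hMX : (1 - t) • ((1 : Matrix (Fin n) (Fin n) ℂ) ⊗ₖ γ (Fin.last d)) + t • Gt
        = ∑ i : Fin (d+1), X i ⊗ₖ γ i := by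
      rw [Fin.sum_univ_castSucc]
      rw [Finset.sum_congr rfl (fun j _ => by rw [hXcast j]), hXlast]
      rw [hGt, Aux.rsmul, Aux.rsmul]
      have hc1 : ((1 - t : ℝ) : ℂ) = 1 - (t:ℂ) := by push_cast; ring
      rw [hc1]
      simp only [Matrix.smul_kronecker, Matrix.add_kronecker, smul_add, Finset.smul_sum]
      module
    have hXherm : ∀ i, (X i)ᴴ = X i := by
      intro i
      induction i using Fin.lastCases with
      | last =>
        rw [hXlast, conjTranspose_add, conjTranspose_smul, conjTranspose_one,
          conjTranspose_smul, hCherm]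
        have h1 : star ((1:ℂ) - (t:ℂ)) = 1 - (t:ℂ) := by
          simp [Complex.star_def, map_sub, Complex.conj_ofReal]
        have h2 : star ((t:ℂ)) = (t:ℂ) := Complex.conj_ofReal t
        rw [h1, h2]
      | cast j =>
        rw [hXcast, conjTranspose_smul, Aux.mIm_herm, Complex.star_def, Complex.conj_ofReal]
    have hMherm : (∑ i : Fin (d+1), X i ⊗ₖ γ i)ᴴ = ∑ i : Fin (d+1), X i ⊗ₖ γ i := by
      rw [conjTranspose_sum]
      exact Finset.sum_congr rfl fun i _ => by
        rw [Aux.conjTranspose_kron, hXherm i, (hherm i).eq]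
    have hsq := Aux.sq_expand X γ hcliff
    -- commutator bounds for the X family
    have hXcl : ∀ p : Fin d,
        ‖X (Fin.last d) * X p.castSucc - X p.castSucc * X (Fin.last d)‖ ≤ 7 * (d:ℝ) * δ := by
      intro p
      have hid : X (Fin.last d) * X p.castSucc - X p.castSucc * X (Fin.last d)
          = ((t:ℂ) * (t:ℂ)) • (C * mIm (A p) - mIm (A p) * C) := by
        rw [hXlast, hXcast]
        simp only [add_mul, mul_add, smul_mul_assoc, mul_smul_comm, one_mul, mul_one,
          smul_smul, smul_sub]
        module
      rw [hid, norm_smul]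
      have h1 : ‖(t:ℂ) * (t:ℂ)‖ ≤ 1 := by
        rw [norm_mul]
        nlinarith [norm_nonneg ((t:ℂ))]
      calc ‖(t:ℂ)*(t:ℂ)‖ * ‖C * mIm (A p) - mIm (A p) * C‖ ≤ 1 * (7 * (d:ℝ) * δ) :=
            mul_le_mul h1 (hCcomm p) (norm_nonneg _) zero_le_one
        _ = 7 * (d:ℝ) * δ := one_mul _
    have hXcc : ∀ p q : Fin d,
        ‖X q.castSucc * X p.castSucc - X p.castSucc * X q.castSucc‖ ≤ 7 * (d:ℝ) * δ := by
      intro p q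
      have hid : X q.castSucc * X p.castSucc - X p.castSucc * X q.castSucc
          = ((t:ℂ) * (t:ℂ)) • (mIm (A q) * mIm (A p) - mIm (A p) * mIm (A q)) := by
        rw [hXcast, hXcast]
        simp only [smul_mul_assoc, mul_smul_comm, smul_smul, smul_sub]
        try module
      rw [hid, norm_smul]
      have h1 : ‖(t:ℂ) * (t:ℂ)‖ ≤ 1 := by
        rw [norm_mul]
        nlinarith [norm_nonneg ((t:ℂ))]
      have hbb : ‖mIm (A q) * mIm (A p) - mIm (A p) * mIm (A q)‖ ≤ 7 * δ :=
        hcomm7 q p _ _ (Or.inr rfl) (Or.inr rfl)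
      calc ‖(t:ℂ)*(t:ℂ)‖ * ‖mIm (A q) * mIm (A p) - mIm (A p) * mIm (A q)‖
          ≤ 1 * (7 * δ) := mul_le_mul h1 hbb (norm_nonneg _) zero_le_one
        _ = 7 * δ := one_mul _
        _ ≤ 7 * (d:ℝ) * δ := by nlinarith
    have hXcommb : ∀ i j : Fin (d+1), ‖X j * X i - X i * X j‖ ≤ 7 * (d:ℝ) * δ := by
      intro i j
      induction i using Fin.lastCases with
      | last =>
        induction j using Fin.lastCases with
        | last => simp only [sub_self, norm_zero]; positivity
        | cast p => rw [norm_sub_rev]; exact hXcl p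
      | cast p =>
        induction j using Fin.lastCases with
        | last => exact hXcl p
        | cast q => exact hXcc p q
    have hEnorm : ‖∑ i : Fin (d+1), ∑ j : Fin (d+1), (X j * X i - X i * X j) ⊗ₖ (γ j * γ i)‖
        ≤ ((d:ℝ)+1)^2 * (7 * (d:ℝ) * δ) := by
      have hterm : ∀ i j : Fin (d+1),
          ‖(X j * X i - X i * X j) ⊗ₖ (γ j * γ i)‖ ≤ 7 * (d:ℝ) * δ := by
        intro i j
        calc ‖(X j * X i - X i * X j) ⊗ₖ (γ j * γ i)‖
            ≤ ‖X j * X i - X i * X j‖ * ‖γ j * γ i‖ := Aux.opNorm_kron_le _ _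
          _ ≤ (7 * (d:ℝ) * δ) * 1 := by
              apply mul_le_mul (hXcommb i j) ?_ (norm_nonneg _) (by positivity)
              calc ‖γ j * γ i‖ ≤ ‖γ j‖ * ‖γ i‖ := Matrix.l2_opNorm_mul _ _
                _ ≤ 1 := by nlinarith [norm_nonneg (γ j), norm_nonneg (γ i), hγ1 j, hγ1 i]
          _ = 7 * (d:ℝ) * δ := mul_one _
      calc ‖∑ i : Fin (d+1), ∑ j : Fin (d+1), (X j * X i - X i * X j) ⊗ₖ (γ j * γ i)‖
          ≤ ∑ i : Fin (d+1), ‖∑ j : Fin (d+1), (X j * X i - X i * X j) ⊗ₖ (γ j * γ i)‖ :=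
            norm_sum_le _ _
        _ ≤ ∑ i : Fin (d+1), ∑ j : Fin (d+1), ‖(X j * X i - X i * X j) ⊗ₖ (γ j * γ i)‖ :=
            Finset.sum_le_sum fun i _ => norm_sum_le _ _
        _ ≤ ∑ _i : Fin (d+1), ∑ _j : Fin (d+1), 7 * (d:ℝ) * δ :=
            Finset.sum_le_sum fun i _ => Finset.sum_le_sum fun j _ => hterm i j
        _ = ((d:ℝ)+1)^2 * (7 * (d:ℝ) * δ) := by
            rw [Finset.sum_const, Finset.sum_const, Finset.card_univ, Fintype.card_fin,
              nsmul_eq_mul, nsmul_eq_mul]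
            push_cast
            ring
    -- quadratic form lower bound for X last
    have hlow : ∀ y : Fin n → ℂ,
        (1 - (d:ℝ)*δ) * Aux.enorm y ^ 2 ≤ (star y ⬝ᵥ X (Fin.last d) *ᵥ y).re := by
      intro y
      have hR : (star y ⬝ᵥ (∑ j : Fin d, mRe (A j)) *ᵥ y).re
          ≤ (d:ℝ) * ((1+δ) * Aux.enorm y ^ 2) := by
        rw [Aux.sum_mulVec, Aux.dotProduct_sum, Complex.re_sum]
        calc ∑ j : Fin d, (star y ⬝ᵥ mRe (A j) *ᵥ y).re
            ≤ ∑ _j : Fin d, (1+δ) * Aux.enorm y ^ 2 := by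
              apply Finset.sum_le_sum
              intro j _
              refine le_trans (Aux.qf_re_le _ _) ?_
              apply mul_le_mul_of_nonneg_right ?_ (sq_nonneg _)
              rw [mRe, norm_smul]
              have hhalf : ‖(1/2:ℂ)‖ = 1/2 := by norm_num
              rw [hhalf]
              have h' : ‖A j + (A j)ᴴ‖ ≤ 2*(1+δ) := by
                calc ‖A j + (A j)ᴴ‖ ≤ ‖A j‖ + ‖(A j)ᴴ‖ := norm_add_le _ _
                  _ ≤ (1+δ) + (1+δ) := by
                      rw [Matrix.l2_opNorm_conjTranspose]
                      exact add_le_add (hAle j) (hAle j)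
                  _ = 2*(1+δ) := by ring
              linarith
          _ = (d:ℝ) * ((1+δ) * Aux.enorm y ^ 2) := by
              rw [Finset.sum_const, Finset.card_univ, Fintype.card_fin, nsmul_eq_mul]
      have hXl : (star y ⬝ᵥ X (Fin.last d) *ᵥ y).re
          = (1-t) * Aux.enorm y ^ 2
            + t * (((d:ℝ)+1) * Aux.enorm y ^ 2
              - (star y ⬝ᵥ (∑ j : Fin d, mRe (A j)) *ᵥ y).re) := by
        rw [hXlast, hC]
        rw [Matrix.add_mulVec, Matrix.smul_mulVec, Matrix.smul_mulVec,
          Matrix.sub_mulVec, Matrix.smul_mulVec, Matrix.one_mulVec]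
        rw [dotProduct_add, dotProduct_smul, dotProduct_smul, dotProduct_sub, dotProduct_smul]
        have h1 : (1:ℂ) - (t:ℂ) = ((1-t : ℝ) : ℂ) := by push_cast; ring
        have h2 : (d:ℂ) + 1 = (((d:ℝ)+1 : ℝ) : ℂ) := by push_cast; ring
        rw [h1, h2]
        simp only [smul_eq_mul, Complex.add_re, Complex.re_ofReal_mul, Complex.sub_re,
          Aux.re_dot_self]
      rw [hXl]
      nlinarith [mul_le_mul_of_nonneg_left hR ht0, sq_nonneg (Aux.enorm y),
        mul_nonneg (mul_nonneg (sub_nonneg.2 ht1) hδnn) (sq_nonneg (Aux.enorm y)),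
        mul_nonneg (mul_nonneg (mul_nonneg ht0 (le_trans zero_le_one hD1)) hδnn)
          (sq_nonneg (Aux.enorm y))]
    have hc0 : 0 ≤ 1 - (d:ℝ)*δ := by nlinarith
    have hlow2 : ∀ y : Fin n → ℂ,
        (1-(d:ℝ)*δ)^2 * Aux.enorm y ^ 2 ≤ Aux.enorm (X (Fin.last d) *ᵥ y) ^ 2 := by
      intro y
      have hcs : (1-(d:ℝ)*δ) * Aux.enorm y ^ 2
          ≤ Aux.enorm y * Aux.enorm (X (Fin.last d) *ᵥ y) := by
        refine le_trans (hlow y) (le_trans (Complex.re_le_norm _) ?_)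
        exact Aux.qf_abs_le' _ _
      by_cases hy : Aux.enorm y = 0
      · rw [hy]
        simp only [ne_eq, OfNat.ofNat_ne_zero, not_false_eq_true, zero_pow, mul_zero]
        positivity
      · have hy' : 0 < Aux.enorm y := lt_of_le_of_ne (Aux.enorm_nonneg y) (Ne.symm hy)
        have h3 : (1-(d:ℝ)*δ) * Aux.enorm y ≤ Aux.enorm (X (Fin.last d) *ᵥ y) := by
          nlinarith [hcs, hy']
        nlinarith [h3, mul_nonneg hc0 (Aux.enorm_nonneg y),
          Aux.enorm_nonneg (X (Fin.last d) *ᵥ y)]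
    -- key coercivity
    have hkey : ∀ x : Fin n × Fin d' → ℂ,
        (1/2 : ℝ) * Aux.enorm x ^ 2
          ≤ Aux.enorm ((∑ i : Fin (d+1), X i ⊗ₖ γ i) *ᵥ x) ^ 2 := by
      intro x
      have e1 : Aux.enorm ((∑ i : Fin (d+1), X i ⊗ₖ γ i) *ᵥ x) ^ 2
          = (star x ⬝ᵥ ((∑ i : Fin (d+1), X i ⊗ₖ γ i) * (∑ i : Fin (d+1), X i ⊗ₖ γ i)) *ᵥ x).re := by
        have h := (Aux.qf_conjTranspose_mul_self (∑ i : Fin (d+1), X i ⊗ₖ γ i) x).symm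
        rwa [hMherm] at h
      rw [e1, hsq]
      rw [Matrix.add_mulVec, dotProduct_add, Complex.add_re]
      have t1 : (1-(d:ℝ)*δ)^2 * Aux.enorm x ^ 2
          ≤ (star x ⬝ᵥ ((∑ i : Fin (d+1), X i * X i) ⊗ₖ (1 : Matrix (Fin d') (Fin d') ℂ)) *ᵥ x).re := by
        rw [Aux.qf_kron_one, Complex.re_sum]
        have hper : ∀ k : Fin d', (1-(d:ℝ)*δ)^2 * Aux.enorm (fun j => x (j,k)) ^ 2
            ≤ (star (fun j => x (j,k)) ⬝ᵥ (∑ i : Fin (d+1), X i * X i) *ᵥ (fun j => x (j,k))).re := by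
          intro k
          have hexp : (star (fun j => x (j,k)) ⬝ᵥ (∑ i : Fin (d+1), X i * X i) *ᵥ (fun j => x (j,k))).re
              = ∑ i : Fin (d+1), (star (fun j => x (j,k)) ⬝ᵥ (X i * X i) *ᵥ (fun j => x (j,k))).re := by
            rw [Aux.sum_mulVec, Aux.dotProduct_sum, Complex.re_sum]
          rw [hexp]
          have hterm : ∀ i : Fin (d+1),
              (star (fun j => x (j,k)) ⬝ᵥ (X i * X i) *ᵥ (fun j => x (j,k))).re
                = Aux.enorm (X i *ᵥ (fun j => x (j,k))) ^ 2 := by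
            intro i
            have hXX : X i * X i = (X i)ᴴ * X i := by rw [hXherm i]
            rw [hXX, Aux.qf_conjTranspose_mul_self]
          have hnn : ∀ i ∈ Finset.univ, (0:ℝ) ≤
              (star (fun j => x (j,k)) ⬝ᵥ (X i * X i) *ᵥ (fun j => x (j,k))).re := by
            intro i _
            rw [hterm i]
            positivity
          have hsingle := Finset.single_le_sum hnn (Finset.mem_univ (Fin.last d))
          calc (1-(d:ℝ)*δ)^2 * Aux.enorm (fun j => x (j,k)) ^ 2
              ≤ Aux.enorm (X (Fin.last d) *ᵥ (fun j => x (j,k))) ^ 2 := hlow2 _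
            _ = (star (fun j => x (j,k)) ⬝ᵥ (X (Fin.last d) * X (Fin.last d)) *ᵥ (fun j => x (j,k))).re :=
                (hterm (Fin.last d)).symm
            _ ≤ ∑ i : Fin (d+1),
                (star (fun j => x (j,k)) ⬝ᵥ (X i * X i) *ᵥ (fun j => x (j,k))).re := hsingle
        calc (1-(d:ℝ)*δ)^2 * Aux.enorm x ^ 2
            = ∑ k : Fin d', (1-(d:ℝ)*δ)^2 * Aux.enorm (fun j => x (j,k)) ^ 2 := by
              rw [Aux.enorm_prod_right x, Finset.mul_sum]
          _ ≤ ∑ k : Fin d',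
              (star (fun j => x (j,k)) ⬝ᵥ (∑ i : Fin (d+1), X i * X i) *ᵥ (fun j => x (j,k))).re :=
              Finset.sum_le_sum fun k _ => hper k
      have t2 : -((1/2) * (((d:ℝ)+1)^2 * (7*(d:ℝ)*δ)) * Aux.enorm x ^ 2)
          ≤ (star x ⬝ᵥ ((2⁻¹:ℂ) • ∑ i : Fin (d+1), ∑ j : Fin (d+1),
              (X j * X i - X i * X j) ⊗ₖ (γ j * γ i)) *ᵥ x).re := by
        refine le_trans ?_ (Aux.qf_re_neg_le _ _)
        apply neg_le_neg
        apply mul_le_mul_of_nonneg_right ?_ (sq_nonneg _)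
        rw [norm_smul]
        have hhalf : ‖(2⁻¹:ℂ)‖ = 1/2 := by norm_num
        rw [hhalf]
        calc (1/2) * ‖∑ i : Fin (d+1), ∑ j : Fin (d+1), (X j * X i - X i * X j) ⊗ₖ (γ j * γ i)‖
            ≤ (1/2) * (((d:ℝ)+1)^2 * (7*(d:ℝ)*δ)) := by
              apply mul_le_mul_of_nonneg_left hEnorm (by norm_num)
          _ = (1/2) * (((d:ℝ)+1)^2 * (7*(d:ℝ)*δ)) := rfl
      have hnum : (1-(d:ℝ)*δ)^2 - (1/2)*(((d:ℝ)+1)^2*(7*(d:ℝ)*δ)) ≥ 1/2 := by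
        nlinarith [ha1, ha2, sq_nonneg ((d:ℝ)*δ)]
      nlinarith [t1, t2, sq_nonneg (Aux.enorm x)]
    have hMunit : IsUnit (∑ i : Fin (d+1), X i ⊗ₖ γ i) := by
      rw [← Matrix.mulVec_injective_iff_isUnit]
      intro x y hxy
      have h0 : (∑ i : Fin (d+1), X i ⊗ₖ γ i) *ᵥ (x - y) = 0 := by
        rw [Matrix.mulVec_sub, hxy, sub_self]
      have hk := hkey (x - y)
      rw [h0] at hk
      have hz : Aux.enorm (0 : Fin n × Fin d' → ℂ) = 0 := by
        simp [Aux.enorm]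
      rw [hz] at hk
      have h2 : Aux.enorm (x - y) ^ 2 ≤ 0 := by nlinarith [sq_nonneg (Aux.enorm (x-y))]
      have h3 : x - y = 0 := Aux.eq_zero_of_enorm_sq_le_zero _ h2
      exact sub_eq_zero.mp h3
    rw [hMX]
    exact hMunit
  refine ⟨main, ?_⟩
  have hmem : ∀ s : unitInterval,
      ((1 - (s:ℝ) : ℝ) : ℂ) • ((1 : Matrix (Fin n) (Fin n) ℂ) ⊗ₖ γ (Fin.last d))
        + ((s:ℝ) : ℂ) • Gt
        ∈ {M : Matrix (Fin n × Fin d') (Fin n × Fin d') ℂ | IsUnit M} := by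
    intro s
    have h := main (s:ℝ) s.2
    rw [Aux.rsmul, Aux.rsmul] at h
    exact h
  refine ⟨⟨⟨fun s => ((1 - (s:ℝ) : ℝ) : ℂ) • ((1 : Matrix (Fin n) (Fin n) ℂ) ⊗ₖ γ (Fin.last d))
      + ((s:ℝ) : ℂ) • Gt, ?_⟩, ?_, ?_⟩, hmem⟩
  · apply Continuous.add
    · exact (Complex.continuous_ofReal.comp
        (continuous_const.sub continuous_subtype_val)).smul continuous_const
    · exact (Complex.continuous_ofReal.comp continuous_subtype_val).smul continuous_const
  · simp
  · simp
end
end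

section
/- Let A be a unital C*-algebra, let δ ≤ 1/2, and let a ∈ A be selfadjoint with ‖a² − 1‖ ≤ δ, so that the spectrum of a is contained in [−√(1+δ), −√(1−δ)] ∪ [√(1−δ), √(1+δ)]. Let P = f(a) be the spectral projection of a onto its positive spectrum, defined by continuous functional calculus with f equal to 1 on [√(1−δ), √(1+δ)] and equal to 0 on [−√(1+δ), −√(1−δ)]. Then for every b ∈ A one has ‖bP − Pb‖ ≤ 2·‖ba − ab‖. -/
set_option maxHeartbeats 1000000

private lemma stmt8_numeric (δ : ℝ) (h0 : 0 ≤ δ) (h1 : δ ≤ 1/2) :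
    Real.sqrt (1-δ) + Real.sqrt (1+δ) ≤ 4*(1-δ) := by
  set p := Real.sqrt (1-δ) with hp
  set q := Real.sqrt (1+δ) with hq
  have hp2 : p^2 = 1-δ := Real.sq_sqrt (by linarith)
  have hq2 : q^2 = 1+δ := Real.sq_sqrt (by linarith)
  have hp0 : 0 ≤ p := Real.sqrt_nonneg _
  have hq0 : 0 ≤ q := Real.sqrt_nonneg _
  nlinarith [sq_nonneg (p - q), sq_nonneg (p + q), sq_nonneg (2*p - 1), sq_nonneg (2*p^2 - p), mul_nonneg hp0 hq0, sq_nonneg (4*p^2 - p - q), sq_nonneg (p*q - 1)]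

/-- in a unital C*-algebra, let `a` be selfadjoint with `‖a² - 1‖ ≤ δ ≤ 1/2`,
and let `P = f(a)` be the spectral projection onto the positive spectrum, given by the
continuous functional calculus for any continuous `f : ℝ → ℝ` equal to `1` on
`[√(1-δ), √(1+δ)]` and to `0` on `[-√(1+δ), -√(1-δ)]`. Then `‖[b, P]‖ ≤ 2‖[b, a]‖` for
every `b`. -/
theorem stmt8 {𝒜 : Type*} [CStarAlgebra 𝒜] (a : 𝒜) (ha : IsSelfAdjoint a)
    (δ : ℝ) (hδ : δ ≤ 1/2) (hb : ‖a * a - 1‖ ≤ δ)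
    (f : ℝ → ℝ) (hf : Continuous f)
    (hf1 : ∀ x ∈ Set.Icc (Real.sqrt (1 - δ)) (Real.sqrt (1 + δ)), f x = 1)
    (hf0 : ∀ x ∈ Set.Icc (-Real.sqrt (1 + δ)) (-Real.sqrt (1 - δ)), f x = 0) :
    ∀ b : 𝒜, ‖b * cfc f a - cfc f a * b‖ ≤ 2 * ‖b * a - a * b‖ := by
  intro b
  have hδ0 : 0 ≤ δ := le_trans (norm_nonneg _) hb
  set m := Real.sqrt (1 - δ) with hm_def
  set M := Real.sqrt (1 + δ) with hM_def
  have hm2 : m^2 = 1 - δ := Real.sq_sqrt (by linarith)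
  have hM2 : M^2 = 1 + δ := Real.sq_sqrt (by linarith)
  have hm0 : 0 < m := Real.sqrt_pos.mpr (by linarith)
  have hM0 : 0 < M := Real.sqrt_pos.mpr (by linarith)
  have hmM : m ≤ M := Real.sqrt_le_sqrt (by linarith)
  -- Step A: spectrum bounds
  have hsq : a * a - 1 = cfc (fun x : ℝ => x * x - 1) a := by
    rw [cfc_sub _ _ a, cfc_mul _ _ a, cfc_id' ℝ a, cfc_const_one ℝ a]
  have hspec : ∀ x ∈ spectrum ℝ a, m ≤ |x| ∧ |x| ≤ M := by
    intro x hx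
    have hle : |x * x - 1| ≤ δ := by
      have h := norm_apply_le_norm_cfc (fun x : ℝ => x * x - 1) a hx
      rw [← hsq] at h
      simpa [Real.norm_eq_abs] using h.trans hb
    rw [abs_le] at hle
    constructor
    · rw [hm_def, ← Real.sqrt_sq_eq_abs]
      exact Real.sqrt_le_sqrt (by nlinarith)
    · rw [hM_def, ← Real.sqrt_sq_eq_abs]
      exact Real.sqrt_le_sqrt (by nlinarith)
  have hne : ∀ x ∈ spectrum ℝ a, x ≠ 0 := by
    intro x hx h0
    have := (hspec x hx).1
    rw [h0, abs_zero] at this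
    linarith
  -- continuity facts
  have habs : ContinuousOn (fun x : ℝ => |x|) (spectrum ℝ a) := continuous_abs.continuousOn
  have hgs : ContinuousOn (fun x : ℝ => |x|⁻¹) (spectrum ℝ a) :=
    habs.inv₀ (fun x hx => abs_ne_zero.mpr (hne x hx))
  have hgu : ContinuousOn (fun x : ℝ => x * |x|⁻¹) (spectrum ℝ a) :=
    continuousOn_id.mul hgs
  obtain ⟨r, hr_def⟩ : ∃ r, r = cfc (fun x : ℝ => |x|) a := ⟨_, rfl⟩
  obtain ⟨s, hs_def⟩ : ∃ s, s = cfc (fun x : ℝ => |x|⁻¹) a := ⟨_, rfl⟩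
  obtain ⟨u, hu_def⟩ : ∃ u, u = cfc (fun x : ℝ => x * |x|⁻¹) a := ⟨_, rfl⟩
  -- algebraic identities
  have hrs : r * s = 1 := by
    rw [hr_def, hs_def, ← cfc_mul _ _ a habs hgs]
    rw [cfc_congr (g := fun _ : ℝ => (1:ℝ)) (fun x hx => by
      simp [mul_inv_cancel₀ (abs_ne_zero.mpr (hne x hx))])]
    exact cfc_const_one ℝ a
  have hsr : s * r = 1 := by
    rw [hs_def, hr_def, ← cfc_mul _ _ a hgs habs]
    rw [cfc_congr (g := fun _ : ℝ => (1:ℝ)) (fun x hx => by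
      simp [inv_mul_cancel₀ (abs_ne_zero.mpr (hne x hx))])]
    exact cfc_const_one ℝ a
  have hr2 : r * r = a * a := by
    rw [hr_def, ← cfc_mul _ _ a habs habs]
    rw [cfc_congr (g := fun x : ℝ => x * x) (fun x hx => by
      simp [abs_mul_abs_self])]
    rw [cfc_mul _ _ a, cfc_id' ℝ a]
  have hu : u = a * s := by
    have h := cfc_mul (fun x : ℝ => x) (fun x : ℝ => |x|⁻¹) a continuousOn_id hgs
    rw [cfc_id' ℝ a] at h
    rw [hu_def, hs_def]
    exact h
  -- P = 2⁻¹ • (1 + u)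
  have hP : cfc f a = (2⁻¹ : ℝ) • (1 + u) := by
    have h1 : cfc f a = cfc (fun x : ℝ => 2⁻¹ * (1 + x * |x|⁻¹)) a := by
      apply cfc_congr
      intro x hx
      obtain ⟨hx1, hx2⟩ := hspec x hx
      show f x = 2⁻¹ * (1 + x * |x|⁻¹)
      rcases lt_or_gt_of_ne (hne x hx) with hneg | hpos
      · have hax : |x| = -x := abs_of_neg hneg
        have hfx : f x = 0 := hf0 x ⟨by rw [hax] at hx2; linarith, by rw [hax] at hx1; linarith⟩
        rw [hfx, hax, inv_neg, mul_neg, mul_inv_cancel₀ hneg.ne]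
        norm_num
      · have hax : |x| = x := abs_of_pos hpos
        have hfx : f x = 1 := hf1 x ⟨by rw [hax] at hx1; linarith, by rw [hax] at hx2; linarith⟩
        rw [hfx, hax, mul_inv_cancel₀ hpos.ne']
        norm_num
    rw [h1, cfc_const_mul _ (fun x : ℝ => 1 + x * |x|⁻¹) a (continuousOn_const.add hgu),
      cfc_add a _ _ continuousOn_const hgu, cfc_const_one ℝ a, ← hu_def]
  -- norm bounds
  have hna : ‖a‖ ≤ M := by
    conv_lhs => rw [← cfc_id' ℝ a]
    exact norm_cfc_le hM0.le (fun x hx => by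
      simpa [Real.norm_eq_abs] using (hspec x hx).2)
  have hns : ‖s‖ ≤ m⁻¹ := by
    rw [hs_def]
    apply norm_cfc_le (by positivity)
    intro x hx
    rw [Real.norm_eq_abs, abs_of_nonneg (inv_nonneg.mpr (abs_nonneg x))]
    exact inv_anti₀ hm0 (hspec x hx).1
  have hnu : ‖u‖ ≤ 1 := by
    rw [hu_def]
    apply norm_cfc_le one_pos.le
    intro x hx
    rw [Real.norm_eq_abs, abs_mul, abs_inv, abs_abs,
      mul_inv_cancel₀ (abs_ne_zero.mpr (hne x hx))]
  -- the Sylvester-type estimate for X = [b, r]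
  obtain ⟨c, hc_def⟩ : ∃ c, c = b * a - a * b := ⟨_, rfl⟩
  obtain ⟨X, hX_def⟩ : ∃ X, X = b * r - r * b := ⟨_, rfl⟩
  have hXr : X * r + r * X = c * a + a * c := by
    have h1 : X * r + r * X = b * (r * r) - (r * r) * b := by
      rw [hX_def]; noncomm_ring
    rw [h1, hr2, hc_def]; noncomm_ring
  have hD : ‖X * r + r * X‖ ≤ 2 * M * ‖c‖ := by
    rw [hXr]
    calc ‖c * a + a * c‖ ≤ ‖c * a‖ + ‖a * c‖ := norm_add_le _ _
      _ ≤ ‖c‖ * ‖a‖ + ‖a‖ * ‖c‖ := add_le_add (norm_mul_le _ _) (norm_mul_le _ _)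
      _ ≤ ‖c‖ * M + M * ‖c‖ := by
          have := norm_nonneg c
          nlinarith
      _ = 2 * M * ‖c‖ := by ring
  obtain ⟨lam, hlam_def⟩ : ∃ lam : ℝ, lam = (m + M)/2 := ⟨_, rfl⟩
  have hlam0 : 0 < lam := by rw [hlam_def]; positivity
  obtain ⟨q, hq_def⟩ : ∃ q, q = cfc (fun x : ℝ => 1 - |x|/lam) a := ⟨_, rfl⟩
  have hq : q = 1 - lam⁻¹ • r := by
    rw [hq_def]
    have heq : (fun x : ℝ => 1 - |x|/lam) = fun x : ℝ => (fun _ : ℝ => (1:ℝ)) x - (fun x : ℝ => lam⁻¹ * |x|) x := by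
      ext x; rw [div_eq_inv_mul]
    rw [heq, cfc_sub _ (fun x : ℝ => lam⁻¹ * |x|) a continuousOn_const (continuousOn_const.mul habs),
      cfc_const_one ℝ a, cfc_const_mul _ _ a habs, ← hr_def]
  have hnq : ‖q‖ ≤ (M - m)/(M + m) := by
    rw [hq_def]
    apply norm_cfc_le (div_nonneg (by linarith) (by positivity))
    intro x hx
    obtain ⟨hx1, hx2⟩ := hspec x hx
    have heq : 1 - |x|/lam = (m + M - 2*|x|)/(M + m) := by
      rw [hlam_def]
      field_simp
      ring
    rw [Real.norm_eq_abs, heq, abs_div, abs_of_pos (show (0:ℝ) < M + m by positivity)]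
    gcongr
    rw [abs_le]
    constructor <;> linarith
  have hX_bound : m * ‖X‖ ≤ M * ‖c‖ := by
    have hiden : lam • (X * q + q * X) = (2*lam) • X - (X * r + r * X) := by
      rw [hq, mul_sub, sub_mul, mul_one, one_mul, mul_smul_comm, smul_mul_assoc]
      rw [smul_add, smul_sub, smul_sub, smul_smul, smul_smul,
        mul_inv_cancel₀ hlam0.ne', one_smul]
      module
    have h2 : (2*lam) * ‖X‖ ≤ ‖X * r + r * X‖ + lam * (2 * ((M - m)/(M + m)) * ‖X‖) := by
      have hXq : ‖lam • (X * q + q * X)‖ ≤ lam * (2 * ((M - m)/(M + m)) * ‖X‖) := by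
        rw [norm_smul, Real.norm_eq_abs, abs_of_pos hlam0]
        apply mul_le_mul_of_nonneg_left _ hlam0.le
        calc ‖X * q + q * X‖ ≤ ‖X‖ * ‖q‖ + ‖q‖ * ‖X‖ :=
              (norm_add_le _ _).trans (add_le_add (norm_mul_le _ _) (norm_mul_le _ _))
          _ ≤ ‖X‖ * ((M-m)/(M+m)) + ((M-m)/(M+m)) * ‖X‖ := by
              have h0 : (0:ℝ) ≤ (M-m)/(M+m) := div_nonneg (by linarith) (by positivity)
              have := norm_nonneg X
              have := norm_nonneg q
              nlinarith
          _ = 2 * ((M - m)/(M + m)) * ‖X‖ := by ring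
      calc (2*lam) * ‖X‖ = ‖(2*lam) • X‖ := by
            rw [norm_smul, Real.norm_eq_abs, abs_of_pos (by linarith)]
        _ = ‖(X * r + r * X) + lam • (X * q + q * X)‖ := by
            rw [hiden]; congr 1; abel
        _ ≤ ‖X * r + r * X‖ + ‖lam • (X * q + q * X)‖ := norm_add_le _ _
        _ ≤ ‖X * r + r * X‖ + lam * (2 * ((M - m)/(M + m)) * ‖X‖) := by linarith
    have hkey : lam * (2 * ((M - m)/(M + m))) = M - m := by
      rw [hlam_def]
      field_simp
      ring
    have h4 : lam * (2 * ((M - m)/(M + m)) * ‖X‖) = (M - m) * ‖X‖ := by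
      rw [← mul_assoc, hkey]
    rw [h4] at h2
    have h5 := hD
    have h6 : 2 * lam = m + M := by rw [hlam_def]; ring
    nlinarith [norm_nonneg X, norm_nonneg c]
  -- final identity: b*u - u*b = (c - u*X)*s
  have hT : b * u - u * b = (c - u * X) * s := by
    have h1 : (c - u * X) * s = c * s - u * (X * s) := by noncomm_ring
    rw [h1, hu, hX_def, hc_def]
    have e1 : (a * s) * ((b * r - r * b) * s) = a * s * b * (r * s) - a * (s * r) * (b * s) := by
      noncomm_ring
    rw [e1, hrs, hsr, mul_one, mul_one]
    noncomm_ring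
  have hnT : ‖b * u - u * b‖ ≤ (‖c‖ + ‖X‖) * m⁻¹ := by
    rw [hT]
    calc ‖(c - u * X) * s‖ ≤ ‖c - u * X‖ * ‖s‖ := norm_mul_le _ _
      _ ≤ (‖c‖ + ‖X‖) * m⁻¹ := by
          apply mul_le_mul _ hns (norm_nonneg _) (by positivity)
          calc ‖c - u * X‖ ≤ ‖c‖ + ‖u * X‖ := norm_sub_le _ _
            _ ≤ ‖c‖ + ‖X‖ := by
                have h := norm_mul_le u X
                have := norm_nonneg X
                nlinarith
  -- conclusion
  have hcomm : b * cfc f a - cfc f a * b = (2⁻¹ : ℝ) • (b * u - u * b) := by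
    rw [hP, mul_smul_comm, smul_mul_assoc, ← smul_sub]
    congr 1
    noncomm_ring
  rw [hcomm, norm_smul, Real.norm_eq_abs]
  rw [show |(2⁻¹ : ℝ)| = 2⁻¹ by norm_num, show b * a - a * b = c from hc_def.symm]
  have hnum : m + M ≤ 4 * m^2 := by
    have := stmt8_numeric δ hδ0 hδ
    rw [← hm_def, ← hM_def] at this
    rw [hm2]; linarith
  calc (2⁻¹ : ℝ) * ‖b * u - u * b‖ ≤ 2⁻¹ * ((‖c‖ + ‖X‖) * m⁻¹) := by gcongr
    _ ≤ 2 * ‖c‖ := by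
        have h : (‖c‖ + ‖X‖) * m⁻¹ ≤ 4 * ‖c‖ := by
          rw [← div_eq_mul_inv, div_le_iff₀ hm0]
          nlinarith [hX_bound, norm_nonneg c, norm_nonneg X, hnum, hm0,
            mul_nonneg (norm_nonneg c) hm0.le]
        linarith
end
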